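/- Let λ ⊢ n, let S be a standard Young tableau of shape λ, and let T be a bijective filling of λ by 1,…,n. The higher Specht polynomial F_T^S has integer coefficients, is homogeneous of degree d := cc(S), contains the monomial p_T^S with coefficient exactly 1, and satisfies σ·F_T^S = sgn~(σ)·F_T^S for every σ in the extended column group C̃(T). -/

import Mathlib

open MvPolynomial

noncomputable section

namespace HigherSpecht

open scoped Classical

/-- A tableau: a filling of the plane (row, column), `0`-indexed, with `0` outside the diagram. -/
abbrev Tab := ℕ × ℕ → ℕ

/-- A permutation of `ℕ` represents an element of `Sₙ` (acting on `{1, …, n}`)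
when it fixes `0` and everything above `n`. -/
def SuppIn (n : ℕ) (w : Equiv.Perm ℕ) : Prop := ∀ i, i = 0 ∨ n < i → w i = i

/-- Descending locations of a permutation (one-line notation `w 1, …, w n`). -/
def DslSet (n : ℕ) (w : Equiv.Perm ℕ) : Finset ℕ :=
  (Finset.Ioo 0 n).filter fun i => w (i + 1) < w i

/-- Ascending locations of a permutation. -/
def AslSet (n : ℕ) (w : Equiv.Perm ℕ) : Finset ℕ :=
  (Finset.Ioo 0 n).filter fun i => w i < w (i + 1)

/-- The row in which the entry `i` shows up in a tableau. -/
def rowIdx (T : Tab) (i : ℕ) : ℕ := sInf {r | ∃ c, T (r, c) = i}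

/-- The column in which the entry `i` shows up in a tableau. -/
def colIdx (T : Tab) (i : ℕ) : ℕ := sInf {c | T (rowIdx T i, c) = i}

/-- The box containing the entry `i`. -/
def posOf (T : Tab) (i : ℕ) : ℕ × ℕ := (rowIdx T i, colIdx T i)

/-- Descending indices of a (standard) tableau: `i` with the row of `i+1` strictly below
the row of `i`. -/
def DsiSet (n : ℕ) (T : Tab) : Finset ℕ :=
  (Finset.Ioo 0 n).filter fun i => rowIdx T i < rowIdx T (i + 1)

/-- `Dsi^c`, the complemented descent set `{n - i | i ∈ Dsi}`. -/
def Dsic (n : ℕ) (T : Tab) : Finset ℕ := (DsiSet n T).image fun i => n - i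

/-- The entry of `ct_J(S)` at a box `c`: the number of elements of `J` smaller than the
entry of `S` at `c`. -/
def ctEntry (T : Tab) (J : Finset ℕ) (c : ℕ × ℕ) : ℕ := (J.filter fun j => j < T c).card

/-- The cocharge tableau `ct(S)` of a standard tableau. -/
def ctTab (n : ℕ) (T : Tab) : Tab := fun c => ctEntry T (DsiSet n T) c

/-- The (total) cocharge `cc(S)`: the sum of the entries of `ct(S)`. -/
def ccStat (n : ℕ) (T : Tab) : ℕ :=
  ∑ i ∈ Finset.Icc 1 n, ctEntry T (DsiSet n T) (posOf T i)

/-- `T` is a bijective filling of the given set of cells by `1, …, n` (`n` the number of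
cells), with `0` outside. -/
def IsFillingF (cells : Finset (ℕ × ℕ)) (T : Tab) : Prop :=
  (∀ c, c ∉ cells → T c = 0) ∧ Set.BijOn T ↑cells (Set.Icc 1 cells.card)

/-- A bijective filling of a Young diagram. -/
def IsFilling (μ : YoungDiagram) (T : Tab) : Prop := IsFillingF μ.cells T

/-- A standard Young tableau of shape `μ`: entries strictly increase along rows and columns. -/
def IsStandard (μ : YoungDiagram) (T : Tab) : Prop :=
  IsFilling μ T ∧ ∀ c₁ ∈ μ.cells, ∀ c₂ ∈ μ.cells,
    c₁ ≠ c₂ → c₁.1 ≤ c₂.1 → c₁.2 ≤ c₂.2 → T c₁ < T c₂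

/-! ### Robinson–Schensted -/

/-- Row insertion: insert `x` into a row, returning the new row and the bumped entry. -/
def rowInsert : ℕ → List ℕ → List ℕ × Option ℕ
  | x, [] => ([x], none)
  | x, y :: ys =>
    if x < y then (x :: ys, some y)
    else
      let p := rowInsert x ys
      (y :: p.1, p.2)

/-- Insertion of an entry into a tableau, given as a list of rows. -/
def tabInsert : List (List ℕ) → ℕ → List (List ℕ)
  | [], x => [[x]]
  | r :: rs, x =>
    match rowInsert x r with
    | (r', none) => r' :: rs
    | (r', some y) => r' :: tabInsert rs y

/-- One-line notation of `w ∈ Sₙ`. -/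
def oneLine (n : ℕ) (w : Equiv.Perm ℕ) : List ℕ := (List.range n).map fun i => w (i + 1)

/-- The insertion tableau of the first `m` letters of `w`, as a list of rows. -/
def PtabListPart (n : ℕ) (w : Equiv.Perm ℕ) (m : ℕ) : List (List ℕ) :=
  ((oneLine n w).take m).foldl tabInsert []

/-- Entry of a list-of-rows tableau at a (0-indexed) cell. -/
def listEntry (t : List (List ℕ)) (c : ℕ × ℕ) : ℕ := (t.getD c.1 []).getD c.2 0

/-- The Robinson–Schensted insertion tableau `P(w)`. -/
def Ptab (n : ℕ) (w : Equiv.Perm ℕ) : Tab := fun c => listEntry (PtabListPart n w n) c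

/-- The Robinson–Schensted recording tableau `Q(w)`: the entry of a cell is the step at
which the cell is added to the shape. -/
def Qtab (n : ℕ) (w : Equiv.Perm ℕ) : Tab := fun c =>
  sInf {m | listEntry (PtabListPart n w m) c ≠ 0}

/-! ### Schützenberger evacuation -/

/-- One step of a jeu de taquin slide into the hole at `c`. -/
def slideOnce (T : Tab) (c : ℕ × ℕ) : Tab × (ℕ × ℕ) :=
  let rc : ℕ × ℕ := (c.1, c.2 + 1)
  let dc : ℕ × ℕ := (c.1 + 1, c.2)
  if T rc = 0 ∧ T dc = 0 then (T, c)
  else if T dc = 0 ∨ (T rc ≠ 0 ∧ T rc < T dc) then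
    (Function.update (Function.update T c (T rc)) rc 0, rc)
  else
    (Function.update (Function.update T c (T dc)) dc 0, dc)

/-- Jeu de taquin slide (with fuel). -/
def slide : ℕ → Tab → ℕ × ℕ → Tab × (ℕ × ℕ)
  | 0, T, c => (T, c)
  | k + 1, T, c =>
    let p := slideOnce T c
    if p.2 = c then (T, c) else slide k p.1 p.2

/-- The Schützenberger evacuation: repeatedly delete the minimal entry, slide into the hole,
decrement the remaining entries, and record the vacated cell. -/
def evacAux : ℕ → Tab → Tab
  | 0, _ => fun _ => 0
  | m + 1, T =>
    let c0 := posOf T 1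
    let p := slide (m + 1) (Function.update T c0 0) c0
    Function.update (evacAux m fun c => p.1 c - 1) p.2 (m + 1)

/-- The evacuation tableau `ev S` of a standard tableau with `n` boxes. -/
def evac (n : ℕ) (T : Tab) : Tab := evacAux n T

/-- `Q̃(w) := ev (Q w)`. -/
def Qt (n : ℕ) (w : Equiv.Perm ℕ) : Tab := evac n (Qtab n w)

/-! ### Row and column groups, higher Specht polynomials -/

/-- The identification of `Fin n` with `{1, …, n} ⊆ ℕ`. -/
def finShift (n : ℕ) : Fin n ≃ {i : ℕ // 1 ≤ i ∧ i ≤ n} where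
  toFun j := ⟨(j : ℕ) + 1, by have := j.isLt; omega⟩
  invFun i := ⟨(i : ℕ) - 1, by have := i.2; omega⟩
  left_inv j := by apply Fin.ext; simp
  right_inv i := by apply Subtype.ext; have := i.2; simp; omega

/-- Embedding of the permutations of `Fin n` into permutations of `ℕ` (acting on `{1, …, n}`). -/
def embedPerm (n : ℕ) (σ : Equiv.Perm (Fin n)) : Equiv.Perm ℕ :=
  σ.extendDomain (finShift n)

/-- The row group `R(T)` of a filling, as a finset of permutations of `Fin n`. -/
def rowFinset (n : ℕ) (T : Tab) : Finset (Equiv.Perm (Fin n)) :=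
  Finset.univ.filter fun τ => ∀ i ∈ Finset.Icc 1 n, rowIdx T (embedPerm n τ i) = rowIdx T i

/-- The column group `C(T)` of a filling, as a finset of permutations of `Fin n`. -/
def colFinset (n : ℕ) (T : Tab) : Finset (Equiv.Perm (Fin n)) :=
  Finset.univ.filter fun σ => ∀ i ∈ Finset.Icc 1 n, colIdx T (embedPerm n σ i) = colIdx T i

/-- The row group `R(T)` as a set of permutations of `ℕ`. -/
def rowGroupSet (n : ℕ) (T : Tab) : Set (Equiv.Perm ℕ) :=
  {w | SuppIn n w ∧ ∀ i ∈ Finset.Icc 1 n, rowIdx T (w i) = rowIdx T i}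

/-- The column group `C(T)` as a set of permutations of `ℕ`. -/
def colGroupSet (n : ℕ) (T : Tab) : Set (Equiv.Perm ℕ) :=
  {w | SuppIn n w ∧ ∀ i ∈ Finset.Icc 1 n, colIdx T (w i) = colIdx T i}

/-- The Young symmetrizer `ε_T = Σ_{σ ∈ C(T)} Σ_{τ ∈ R(T)} sgn(σ) σ τ` acting on polynomials
(permutations acting by permuting the variables). -/
def epsAct (n : ℕ) (T : Tab) (p : MvPolynomial ℕ ℚ) : MvPolynomial ℕ ℚ :=
  ∑ σ ∈ colFinset n T, ∑ τ ∈ rowFinset n T,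
    (Equiv.Perm.sign σ : ℤ) • rename (⇑(embedPerm n σ * embedPerm n τ)) p

/-- The monomial `p_T^S = Π_i x_i^{h_i}`, where `h_i` is the entry of `ct S` in the box of
`T` containing `i`. -/
def pTS (n : ℕ) (T S : Tab) : MvPolynomial ℕ ℚ :=
  ∏ i ∈ Finset.Icc 1 n, X i ^ ctEntry S (DsiSet n S) (posOf T i)

/-- `s_T^S`: the order of the stabilizer of `p_T^S` in `R(T)`. -/
def sTS (n : ℕ) (T S : Tab) : ℕ :=
  ((rowFinset n T).filter fun τ =>
    rename (⇑(embedPerm n τ)) (pTS n T S) = pTS n T S).card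

/-- The higher Specht polynomial `F_T^S := ε_T p_T^S / s_T^S`. -/
def FTS (n : ℕ) (T S : Tab) : MvPolynomial ℕ ℚ :=
  ((sTS n T S : ℚ)⁻¹) • epsAct n T (pTS n T S)

/-- The higher Specht polynomial `F_w := F_{P(w)}^{Q̃(w)}` of a permutation. -/
def Fw (n : ℕ) (w : Equiv.Perm ℕ) : MvPolynomial ℕ ℚ := FTS n (Ptab n w) (Qt n w)

/-- The elementary symmetric polynomial `e_r` in the variables `x_1, …, x_n`. -/
def esym (n r : ℕ) : MvPolynomial ℕ ℚ :=
  ∑ s ∈ (Finset.Icc 1 n).powersetCard r, ∏ i ∈ s, X i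

/-- The representation `V^S`: the span of the higher Specht polynomials `F_T^S` over all
bijective fillings `T` of the given cells. -/
def VS (n : ℕ) (cells : Finset (ℕ × ℕ)) (S : Tab) : Submodule ℚ (MvPolynomial ℕ ℚ) :=
  Submodule.span ℚ {p | ∃ T : Tab, IsFillingF cells T ∧ p = FTS n T S}

/-- Multiplication of a subspace of polynomials by a fixed polynomial. -/
def polyMul (q : MvPolynomial ℕ ℚ) (V : Submodule ℚ (MvPolynomial ℕ ℚ)) :
    Submodule ℚ (MvPolynomial ℕ ℚ) :=
  Submodule.map (LinearMap.mulLeft ℚ q) V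

/-- The symmetric multiplier `Π_r e_r^{h_r}`. -/
def eProd (n : ℕ) (h : ℕ → ℕ) : MvPolynomial ℕ ℚ := ∏ r ∈ Finset.Icc 1 n, esym n r ^ h r

/-- `V^S_h := (Π_r e_r^{h_r}) V^S`. -/
def VSh (n : ℕ) (cells : Finset (ℕ × ℕ)) (S : Tab) (h : ℕ → ℕ) :
    Submodule ℚ (MvPolynomial ℕ ℚ) :=
  polyMul (eProd n h) (VS n cells S)

/-! ### The representations `R_{n,I}` -/

/-- For `i ∈ I`, `r_i := #{j ∈ {1,…,n-1} \ I : j < i}`. -/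
def rIdxI (n : ℕ) (I : Finset ℕ) (i : ℕ) : ℕ :=
  ((Finset.Ioo 0 n \ I).filter fun j => j < i).card

/-- The vector `h^S_I`, whose `r`-th entry (for `r ≥ 1`) is `#{i ∈ I \ Dsi^c(S) : r_i = r}`. -/
def hSI (n : ℕ) (I : Finset ℕ) (S : Tab) : ℕ → ℕ := fun r =>
  if 1 ≤ r then ((I \ Dsic n S).filter fun i => rIdxI n I i = r).card else 0

/-- The indicator vector `h(I,S)` of the set `I \ Dsi^c(S)`. -/
def hInd (n : ℕ) (I : Finset ℕ) (S : Tab) : ℕ → ℕ := fun r =>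
  if r ∈ I \ Dsic n S then 1 else 0

/-- `F_{w,I} := F_w · Π_{i ∈ I \ Dsl(w)} e_{r_i}`. -/
def FwI (n : ℕ) (I : Finset ℕ) (w : Equiv.Perm ℕ) : MvPolynomial ℕ ℚ :=
  Fw n w * ∏ i ∈ I \ DslSet n w, esym n (rIdxI n I i)

/-- The homogeneous version `F^hom_{w,I} := F_w · Π_{i ∈ I \ Dsl(w)} e_i`. -/
def FwIhom (n : ℕ) (I : Finset ℕ) (w : Equiv.Perm ℕ) : MvPolynomial ℕ ℚ :=
  Fw n w * ∏ i ∈ I \ DslSet n w, esym n i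

/-- The representation `R_{n,I}`: span of the `F_{w,I}` over `w` with `Dsl(w) ⊆ I`. -/
def RnI (n : ℕ) (I : Finset ℕ) : Submodule ℚ (MvPolynomial ℕ ℚ) :=
  Submodule.span ℚ {p | ∃ w : Equiv.Perm ℕ, SuppIn n w ∧ DslSet n w ⊆ I ∧ p = FwI n I w}

/-- The homogeneous representation `R^hom_{n,I}`. -/
def RnIhom (n : ℕ) (I : Finset ℕ) : Submodule ℚ (MvPolynomial ℕ ℚ) :=
  Submodule.span ℚ {p | ∃ w : Equiv.Perm ℕ, SuppIn n w ∧ DslSet n w ⊆ I ∧ p = FwIhom n I w}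

/-- The index type for the decomposition of `R_{n,I}`: pairs of a partition `λ ⊢ n` and a
standard Young tableau `S` of shape `λ` with `Dsi^c(S) ⊆ I`. -/
def SIdx (n : ℕ) (I : Finset ℕ) : Type :=
  {q : YoungDiagram × Tab // q.1.cells.card = n ∧ IsStandard q.1 q.2 ∧ Dsic n q.2 ⊆ I}

/-! ### Ordered set partitions -/

/-- The cumulative values `j_h` attached to a subset `I ⊆ {1,…,n-1}` (`j_0 = 0`,
`j_h` the `h`-th smallest element, `j_{|I|+1} = n`). -/
def jval (n : ℕ) (I : Finset ℕ) (h : ℕ) : ℕ :=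
  if h = 0 then 0 else if h ≤ I.card then (I.sort (· ≤ ·)).getD (h - 1) 0 else n

/-- The composition `comp_n I`, as a function of the index `0 ≤ h ≤ |I|`. -/
def compFun (n : ℕ) (I : Finset ℕ) (h : ℕ) : ℕ := jval n I (h + 1) - jval n I h

/-- The set `OP_{n,I}` of ordered set partitions of `{1,…,n}` into `|I| + 1` blocks whose
sizes are given by `comp_n I` (blocks indexed by `ℕ`, empty from index `|I| + 1` on). -/
def OPset (n : ℕ) (I : Finset ℕ) : Set (ℕ → Finset ℕ) :=
  {B | (∀ h, I.card + 1 ≤ h → B h = ∅) ∧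
       (∀ h₁ h₂, h₁ ≠ h₂ → Disjoint (B h₁) (B h₂)) ∧
       (∀ h ≤ I.card, (B h).card = compFun n I h) ∧
       Finset.Icc 1 n = (Finset.range (I.card + 1)).biUnion B}

/-- The natural action of a permutation on an ordered set partition. -/
def permOP (w : Equiv.Perm ℕ) (B : ℕ → Finset ℕ) : ℕ → Finset ℕ := fun h => (B h).image w

/-! ### The quotient `R_{n,k}` -/

/-- Elementary symmetric polynomials in `Fin n` variables. -/
def esymFin (n r : ℕ) : MvPolynomial (Fin n) ℚ :=
  ∑ s ∈ (Finset.univ : Finset (Fin n)).powersetCard r, ∏ i ∈ s, X i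

/-- The ideal defining `R_{n,k}`: generated by `x_i^k` and `e_r`, `n-k+1 ≤ r ≤ n`. -/
def Jnk (n k : ℕ) : Ideal (MvPolynomial (Fin n) ℚ) :=
  Ideal.span ((Set.range fun i : Fin n => (X i : MvPolynomial (Fin n) ℚ) ^ k) ∪
    {p | ∃ r, n - k + 1 ≤ r ∧ r ≤ n ∧ p = esymFin n r})

/-- The map sending `x_i` (for `1 ≤ i ≤ n`) to the corresponding variable of
`ℚ[x_1, …, x_n]`, and all other variables to `0`. -/
def toFin (n : ℕ) : MvPolynomial ℕ ℚ →ₐ[ℚ] MvPolynomial (Fin n) ℚ :=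
  aeval fun i => if h : 1 ≤ i ∧ i ≤ n then X (⟨i - 1, by omega⟩ : Fin n) else 0

/-- The quotient projection onto `R_{n,k}`. -/
def projNK (n k : ℕ) : MvPolynomial ℕ ℚ →ₐ[ℚ] (MvPolynomial (Fin n) ℚ ⧸ Jnk n k) :=
  (Ideal.Quotient.mkₐ ℚ (Jnk n k)).comp (toFin n)

/-! ### Corners, insertions and the induction/extension operators -/

/-- `v` is an external corner of `μ`. -/
def IsCorner (μ : YoungDiagram) (v : ℕ × ℕ) : Prop :=
  v ∉ μ.cells ∧ ∃ ν : YoungDiagram, ν.cells = insert v μ.cells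

/-- `S +̃ v := ev (ev S + v)`, where `+ v` places the entry `n + 1` in the box `v`. -/
def Sadd (n : ℕ) (S : Tab) (v : ℕ × ℕ) : Tab :=
  evac (n + 1) (Function.update (evac n S) v (n + 1))

/-- `δ^{S,v}`: `0` if `v` lies strictly below the row of `n` in `ev S`, and `1` otherwise. -/
def deltaSV (n : ℕ) (S : Tab) (v : ℕ × ℕ) : ℕ :=
  if rowIdx (evac n S) n < v.1 then 0 else 1

/-- `h + δ·1_t`: add `δ` to the coordinate `t` of `h` when `t ≥ 1`; do nothing for `t = 0`. -/
def addAt (h : ℕ → ℕ) (t δ : ℕ) : ℕ → ℕ := fun r =>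
  if r = t ∧ 1 ≤ t then h r + δ else h r

/-- The induction operator on a single summand:
`Ind_t V^S_h := ⊕_{v ∈ EC(λ)} V^{S +̃ v}_{h + δ^{S,v}·1_t}`. -/
def IndVSh (t n : ℕ) (μ : YoungDiagram) (S : Tab) (h : ℕ → ℕ) :
    Submodule ℚ (MvPolynomial ℕ ℚ) :=
  ⨆ v : ℕ × ℕ, ⨆ _ : IsCorner μ v,
    VSh (n + 1) (insert v μ.cells) (Sadd n S v) (addAt h t (deltaSV n S v))

/-- The extension operator on a single summand:
`Ext V^S_h := ⊕_{v ∈ EC(λ), δ^{S,v} = 1} V^{S +̃ v}_h`. -/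
def ExtVSh (n : ℕ) (μ : YoungDiagram) (S : Tab) (h : ℕ → ℕ) :
    Submodule ℚ (MvPolynomial ℕ ℚ) :=
  ⨆ v : ℕ × ℕ, ⨆ _ : IsCorner μ v ∧ deltaSV n S v = 1,
    VSh (n + 1) (insert v μ.cells) (Sadd n S v) h

/-- `Ind_t R_{n,I}`, applied summand-by-summand to the decomposition of `R_{n,I}`. -/
def IndR (t n : ℕ) (I : Finset ℕ) : Submodule ℚ (MvPolynomial ℕ ℚ) :=
  ⨆ q : SIdx n I, IndVSh t n q.1.1 q.1.2 (hSI n I q.1.2)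

/-- `Ext R_{n,I}`, applied summand-by-summand. -/
def ExtR (n : ℕ) (I : Finset ℕ) : Submodule ℚ (MvPolynomial ℕ ℚ) :=
  ⨆ q : SIdx n I, ExtVSh n q.1.1 q.1.2 (hSI n I q.1.2)

/-- `Ind_t R^hom_{n,I}`, applied summand-by-summand. -/
def IndRhom (t n : ℕ) (I : Finset ℕ) : Submodule ℚ (MvPolynomial ℕ ℚ) :=
  ⨆ q : SIdx n I, IndVSh t n q.1.1 q.1.2 (hInd n I q.1.2)

/-- `Ext R^hom_{n,I}`, applied summand-by-summand. -/
def ExtRhom (n : ℕ) (I : Finset ℕ) : Submodule ℚ (MvPolynomial ℕ ℚ) :=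
  ⨆ q : SIdx n I, ExtVSh n q.1.1 q.1.2 (hInd n I q.1.2)

/-- The lift `R̃_{n,k} = ⊕_{|I| = k-1} R_{n,I}` of the quotient `R_{n,k}`. -/
def Rtil (n k : ℕ) : Submodule ℚ (MvPolynomial ℕ ℚ) :=
  ⨆ I : Finset ℕ, ⨆ _ : I ⊆ Finset.Ioo 0 n ∧ I.card + 1 = k, RnI n I

/-! ### The extended column group -/

/-- The length of column `c` of a tableau. -/
def colLenT (n : ℕ) (T : Tab) (c : ℕ) : ℕ :=
  ((Finset.range (n + 1)).filter fun r => T (r, c) ≠ 0).card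

/-- `q_a`: the number of columns of length `> a` (columns of length `a` occupy the
`0`-indexed columns `q_a, …, q_a + t_a - 1`). -/
def qaT (n : ℕ) (T : Tab) (a : ℕ) : ℕ :=
  ((Finset.range (n + 1)).filter fun c => a < colLenT n T c).card

/-- `t_a`: the number of columns of length `a`. -/
def taT (n : ℕ) (T : Tab) (a : ℕ) : ℕ :=
  ((Finset.range (n + 1)).filter fun c => colLenT n T c = a).card

/-- The function underlying the permutation `η_T`: the entry in row `j` of column `q_a + i`
is sent to the entry in row `j` of column `q_a + η(i)`; everything else is fixed. -/
def etaFun (n : ℕ) (T : Tab) (a : ℕ) (η : Equiv.Perm ℕ) : ℕ → ℕ := fun m =>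
  let c := colIdx T m
  if 1 ≤ m ∧ m ≤ n ∧ qaT n T a ≤ c ∧ c < qaT n T a + taT n T a then
    T (rowIdx T m, qaT n T a + η (c - qaT n T a))
  else m

/-- The set of the permutations `η_T` (over all `a ≥ 1` and all `η ∈ S_{t_a}`). -/
def etaSet (n : ℕ) (T : Tab) : Set (Equiv.Perm ℕ) :=
  {w | ∃ a, 1 ≤ a ∧ ∃ η : Equiv.Perm ℕ, (∀ i, taT n T a ≤ i → η i = i) ∧
    ⇑w = etaFun n T a η}

/-- The subgroup generated by the permutations `η_T` (a copy of `Π_a S_{t_a}`). -/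
def etaSubgroup (n : ℕ) (T : Tab) : Subgroup (Equiv.Perm ℕ) :=
  Subgroup.closure (etaSet n T)

/-- The column group `C(T)` as a subgroup. -/
def colSubgroup (n : ℕ) (T : Tab) : Subgroup (Equiv.Perm ℕ) :=
  Subgroup.closure (colGroupSet n T)

/-- The extended column group `C̃(T)`, generated by `C(T)` and the `η_T`. -/
def extColSubgroup (n : ℕ) (T : Tab) : Subgroup (Equiv.Perm ℕ) :=
  Subgroup.closure (colGroupSet n T ∪ etaSet n T)

/-- The sign of a permutation of `ℕ` supported on `{1, …, n}`. -/
def signOn (n : ℕ) (σ : Equiv.Perm ℕ) : ℤ :=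
  if h : ∃ τ : Equiv.Perm (Fin n), embedPerm n τ = σ then
    (Equiv.Perm.sign h.choose : ℤ) else 0

/-! ### Semistandard tableaux, (generalized) cocharge tableaux -/

/-- A semistandard filling of the given cells: rows weakly increase, columns strictly
increase (entries outside the cells are normalized to `0`). -/
def IsSSYTOn (cells : Finset (ℕ × ℕ)) (C : Tab) : Prop :=
  (∀ c ∉ cells, C c = 0) ∧
  (∀ c₁ ∈ cells, ∀ c₂ ∈ cells, c₁.1 = c₂.1 → c₁.2 ≤ c₂.2 → C c₁ ≤ C c₂) ∧
  (∀ c₁ ∈ cells, ∀ c₂ ∈ cells, c₁.2 = c₂.2 → c₁.1 < c₂.1 → C c₁ < C c₂)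

/-- A generalized cocharge tableau with entries exactly `{0, …, k-1}`. -/
def IsGCT (cells : Finset (ℕ × ℕ)) (C : Tab) (k : ℕ) : Prop :=
  IsSSYTOn cells C ∧ (∀ c ∈ cells, C c < k) ∧ ∀ h < k, ∃ c ∈ cells, C c = h

/-- The type of a generalized cocharge tableau: the set of cumulative multiplicities
`#{c : C c < h}` for `1 ≤ h ≤ k - 1`. -/
def gctType (cells : Finset (ℕ × ℕ)) (C : Tab) (k : ℕ) : Finset ℕ :=
  (Finset.Ico 1 k).image fun h => (cells.filter fun c => C c < h).card

/-- The standardization of a semistandard tableau: entries are replaced by `1, …, n`,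
processing the values in increasing order and, for equal values, from left to right. -/
def stdz (cells : Finset (ℕ × ℕ)) (C : Tab) : Tab := fun c =>
  if c ∈ cells then
    (cells.filter fun c' => C c' < C c ∨
      (C c' = C c ∧ (c'.2 < c.2 ∨ (c'.2 = c.2 ∧ c'.1 ≤ c.1)))).card
  else 0

/-- A cocharge tableau of shape `μ`: one of the form `ct S` for a standard `S`. -/
def IsCCT (μ : YoungDiagram) (C : Tab) : Prop :=
  ∃ S : Tab, IsStandard μ S ∧ ctTab μ.cells.card S = C

/-- `k` for a tableau: one more than the maximal entry. -/
def kOf (cells : Finset (ℕ × ℕ)) (C : Tab) : ℕ := cells.sup C + 1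

/-- `Dsp^c(C) := {n - i : i ∈ J}`, `J` the type of the cocharge tableau `C`. -/
def Dspc (n : ℕ) (cells : Finset (ℕ × ℕ)) (C : Tab) : Finset ℕ :=
  (gctType cells C (kOf cells C)).image fun i => n - i

/-- The entry sum `Σ(C)`. -/
def entrySum (cells : Finset (ℕ × ℕ)) (C : Tab) : ℕ := ∑ c ∈ cells, C c

/-- `C +̂ v := ct (ct⁻¹(C) +̃ v)`, where `ct⁻¹` is the standardization. -/
def Cadd (n : ℕ) (μ : YoungDiagram) (C : Tab) (v : ℕ × ℕ) : Tab :=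
  ctTab (n + 1) (Sadd n (stdz μ.cells C) v)

/-- The standard Young tableau `S⁰` of shape `μ` filling the rows consecutively. -/
def rowWordTab (μ : YoungDiagram) : Tab := fun c =>
  if c ∈ μ.cells then (∑ r ∈ Finset.range c.1, μ.rowLen r) + c.2 + 1 else 0

/-- The word of an ordered set partition: the blocks listed in order, each sorted
increasingly. -/
def opWord (k : ℕ) (B : ℕ → Finset ℕ) : List ℕ :=
  (List.range k).foldr (fun h acc => (B h).sort (· ≤ ·) ++ acc) []

/-- Renaming the variables of a power series along a permutation. -/
def permSeries (g : Equiv.Perm ℕ) (F : MvPowerSeries ℕ ℚ) : MvPowerSeries ℕ ℚ :=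
  fun m => F (Finsupp.mapDomain ⇑g⁻¹ m)


-- Part 0
lemma embedPerm_apply_not (n : ℕ) (σ : Equiv.Perm (Fin n)) {i : ℕ} (h : ¬ (1 ≤ i ∧ i ≤ n)) :
    embedPerm n σ i = i :=
  Equiv.Perm.extendDomain_apply_not_subtype σ (finShift n) h

lemma embedPerm_mem (n : ℕ) (σ : Equiv.Perm (Fin n)) {i : ℕ} (h : i ∈ Finset.Icc 1 n) :
    embedPerm n σ i ∈ Finset.Icc 1 n := by
  simp only [Finset.mem_Icc] at h ⊢
  rw [embedPerm, Equiv.Perm.extendDomain_apply_subtype σ (finShift n) h]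
  exact ((finShift n) (σ ((finShift n).symm ⟨i, h⟩))).2

lemma embedPerm_mul (n : ℕ) (σ τ : Equiv.Perm (Fin n)) :
    embedPerm n (σ * τ) = embedPerm n σ * embedPerm n τ :=
  map_mul (Equiv.Perm.extendDomainHom (finShift n)) σ τ

lemma embedPerm_one (n : ℕ) : embedPerm n 1 = 1 :=
  map_one (Equiv.Perm.extendDomainHom (finShift n))

lemma embedPerm_inv (n : ℕ) (σ : Equiv.Perm (Fin n)) :
    embedPerm n σ⁻¹ = (embedPerm n σ)⁻¹ :=
  map_inv (Equiv.Perm.extendDomainHom (finShift n)) σ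

lemma embedPerm_injective (n : ℕ) : Function.Injective (embedPerm n) := by
  intro σ τ h
  ext j
  have := congrArg (fun w : Equiv.Perm ℕ => w ((j : ℕ) + 1)) h
  simp only [embedPerm] at this
  have hj : (1 : ℕ) ≤ (j : ℕ) + 1 ∧ (j : ℕ) + 1 ≤ n := ⟨by omega, by have := j.isLt; omega⟩
  rw [Equiv.Perm.extendDomain_apply_subtype σ (finShift n) hj,
    Equiv.Perm.extendDomain_apply_subtype τ (finShift n) hj] at this
  have h2 : (finShift n).symm ⟨(j : ℕ) + 1, hj⟩ = j := by
    apply (finShift n).injective; apply Subtype.ext; simp [finShift]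
  rw [h2] at this
  have := Subtype.ext this
  have := (finShift n).injective this
  omega

lemma suppIn_mem {n : ℕ} {w : Equiv.Perm ℕ} (hw : SuppIn n w) {i : ℕ}
    (h : i ∈ Finset.Icc 1 n) : w i ∈ Finset.Icc 1 n := by
  simp only [Finset.mem_Icc] at h ⊢
  constructor
  · rcases Nat.eq_zero_or_pos (w i) with h0 | h0
    · exfalso
      have : w i = w 0 := by rw [hw 0 (Or.inl rfl), h0]
      have := w.injective this; omega
    · omega
  · by_contra hgt
    push_neg at hgt
    have : w (w i) = w i := hw (w i) (Or.inr hgt)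
    have := w.injective this; omega

lemma suppIn_one (n : ℕ) : SuppIn n 1 := fun _ _ => rfl

lemma suppIn_mul {n : ℕ} {w v : Equiv.Perm ℕ} (hw : SuppIn n w) (hv : SuppIn n v) :
    SuppIn n (w * v) := fun i hi => by
  simp only [Equiv.Perm.mul_apply]; rw [hv i hi, hw i hi]

lemma suppIn_inv {n : ℕ} {w : Equiv.Perm ℕ} (hw : SuppIn n w) : SuppIn n w⁻¹ := fun i hi => by
  have h1 : w i = i := hw i hi
  calc w⁻¹ i = w⁻¹ (w i) := by rw [h1]
  _ = i := w.symm_apply_apply i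

lemma suppIn_embedPerm (n : ℕ) (σ : Equiv.Perm (Fin n)) : SuppIn n (embedPerm n σ) := by
  intro i hi
  apply embedPerm_apply_not
  omega

lemma suppIn_exists {n : ℕ} {w : Equiv.Perm ℕ} (hw : SuppIn n w) :
    ∃ τ : Equiv.Perm (Fin n), embedPerm n τ = w := by
  have hp : ∀ i : ℕ, (1 ≤ i ∧ i ≤ n) ↔ (1 ≤ w i ∧ w i ≤ n) := by
    intro i
    constructor
    · intro h
      have := suppIn_mem hw (Finset.mem_Icc.2 h); simpa [Finset.mem_Icc] using this
    · intro h
      by_contra hn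
      have : w i = i := hw i (by omega)
      omega
  let sp : Equiv.Perm {i : ℕ // 1 ≤ i ∧ i ≤ n} := w.subtypePerm (fun i => (hp i).symm)
  refine ⟨((finShift n).trans sp).trans (finShift n).symm, ?_⟩
  ext i
  by_cases hi : 1 ≤ i ∧ i ≤ n
  · rw [embedPerm, Equiv.Perm.extendDomain_apply_subtype _ (finShift n) hi]
    simp [sp, Equiv.Perm.subtypePerm]
  · rw [embedPerm_apply_not n _ hi, hw i (by omega)]

lemma signOn_embed (n : ℕ) (σ : Equiv.Perm (Fin n)) :
    signOn n (embedPerm n σ) = (Equiv.Perm.sign σ : ℤ) := by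
  have h : ∃ τ : Equiv.Perm (Fin n), embedPerm n τ = embedPerm n σ := ⟨σ, rfl⟩
  rw [signOn, dif_pos h]
  congr 2
  exact embedPerm_injective n h.choose_spec


-- Part 1: filling facts
section Filling
variable {cells : Finset (ℕ × ℕ)} {T : Tab}

lemma filling_val_mem (hT : IsFillingF cells T) {b : ℕ × ℕ} (hb : b ∈ cells) :
    T b ∈ Finset.Icc 1 cells.card := by
  have := hT.2.1 (by exact_mod_cast hb : b ∈ (↑cells : Set (ℕ × ℕ)))
  simpa [Finset.mem_Icc, Set.mem_Icc] using this

lemma filling_pos (hT : IsFillingF cells T) {b : ℕ × ℕ} (hb : b ∈ cells) :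
    rowIdx T (T b) = b.1 ∧ colIdx T (T b) = b.2 := by
  have h1 : 1 ≤ T b := (Finset.mem_Icc.1 (filling_val_mem hT hb)).1
  have key : ∀ b' : ℕ × ℕ, T b' = T b → b' = b := by
    intro b' hb'
    have hb'c : b' ∈ cells := by
      by_contra hc
      rw [hT.1 b' hc] at hb'; omega
    exact hT.2.2.1 (by exact_mod_cast hb'c) (by exact_mod_cast hb) hb'
  have hrow : rowIdx T (T b) = b.1 := by
    have : {r | ∃ c, T (r, c) = T b} = {b.1} := by
      ext r
      constructor
      · rintro ⟨c, hc⟩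
        have := key (r, c) hc
        simp [← this]
      · rintro rfl
        exact ⟨b.2, by rw [Prod.mk.eta]⟩
    rw [rowIdx, this, csInf_singleton]
  refine ⟨hrow, ?_⟩
  have : {c | T (rowIdx T (T b), c) = T b} = {b.2} := by
    rw [hrow]
    ext c
    constructor
    · intro hc
      have := key (b.1, c) hc
      simp [Prod.ext_iff] at this
      simp [this]
    · rintro rfl
      show T (b.1, b.2) = T b
      rw [Prod.mk.eta]
  rw [colIdx, this, csInf_singleton]

lemma filling_posOf (hT : IsFillingF cells T) {b : ℕ × ℕ} (hb : b ∈ cells) :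
    posOf T (T b) = b := by
  have := filling_pos hT hb
  rw [posOf, this.1, this.2]

lemma filling_exists (hT : IsFillingF cells T) {i : ℕ} (hi : i ∈ Finset.Icc 1 cells.card) :
    ∃ b ∈ cells, T b = i := by
  have : i ∈ Set.Icc 1 cells.card := by simpa [Finset.mem_Icc, Set.mem_Icc] using hi
  obtain ⟨b, hb, hbi⟩ := hT.2.2.2 this
  exact ⟨b, by exact_mod_cast hb, hbi⟩

lemma filling_posOf_mem (hT : IsFillingF cells T) {i : ℕ} (hi : i ∈ Finset.Icc 1 cells.card) :
    posOf T i ∈ cells ∧ T (posOf T i) = i := by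
  obtain ⟨b, hb, rfl⟩ := filling_exists hT hi
  rw [filling_posOf hT hb]
  exact ⟨hb, rfl⟩

end Filling

-- Part 2: descents and strict increase of ct down columns
lemma exists_descent {n : ℕ} (S : Tab) {i j : ℕ} (h1 : 1 ≤ i) (hj : j ≤ n) (hij : i < j)
    (hrow : rowIdx S i < rowIdx S j) : ∃ d ∈ DsiSet n S, i ≤ d ∧ d < j := by
  by_contra hnd
  push_neg at hnd
  have key : ∀ k : ℕ, i + k ≤ j → rowIdx S (i + k) ≤ rowIdx S i := by
    intro k
    induction k with
    | zero => intro _; simp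
    | succ m ih =>
      intro hm
      have h2 : i + m ∈ Finset.Ioo 0 n := by simp [Finset.mem_Ioo]; omega
      have h3 : i + m ∉ DsiSet n S := by
        intro hd
        have := hnd (i + m) hd (by omega)
        omega
      have h4 : ¬ rowIdx S (i + m) < rowIdx S (i + m + 1) := by
        intro hlt
        exact h3 (Finset.mem_filter.2 ⟨h2, hlt⟩)
      have := ih (by omega)
      have h5 : rowIdx S (i + (m + 1)) = rowIdx S (i + m + 1) := rfl
      omega
  have := key (j - i) (by omega)
  rw [Nat.add_sub_cancel' (le_of_lt hij)] at this
  omega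

lemma ct_strict_col {n : ℕ} {μ : YoungDiagram} (hμ : μ.cells.card = n) {S : Tab}
    (hS : IsStandard μ S) {b₁ b₂ : ℕ × ℕ} (hb₁ : b₁ ∈ μ.cells) (hb₂ : b₂ ∈ μ.cells)
    (hcol : b₁.2 = b₂.2) (hrow : b₁.1 < b₂.1) :
    ctEntry S (DsiSet n S) b₁ < ctEntry S (DsiSet n S) b₂ := by
  have hlt : S b₁ < S b₂ :=
    hS.2 b₁ hb₁ b₂ hb₂ (by intro h; rw [h] at hrow; omega) (le_of_lt hrow) (le_of_eq hcol)
  have hv₁ := filling_val_mem hS.1 hb₁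
  have hv₂ := filling_val_mem hS.1 hb₂
  rw [hμ] at hv₁ hv₂
  simp only [Finset.mem_Icc] at hv₁ hv₂
  have hr₁ : rowIdx S (S b₁) = b₁.1 := (filling_pos hS.1 hb₁).1
  have hr₂ : rowIdx S (S b₂) = b₂.1 := (filling_pos hS.1 hb₂).1
  obtain ⟨d, hd, hd₁, hd₂⟩ := exists_descent S hv₁.1 hv₂.2 hlt (by rw [hr₁, hr₂]; exact hrow)
  rw [ctEntry, ctEntry]
  apply Finset.card_lt_card
  constructor
  · intro x hx
    simp only [Finset.mem_filter] at hx ⊢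
    exact ⟨hx.1, by omega⟩
  · intro hsub
    have : d ∈ (DsiSet n S).filter fun j => j < S b₁ := hsub (by
      simp only [Finset.mem_filter]; exact ⟨hd, by omega⟩)
    simp only [Finset.mem_filter] at this
    omega

-- Part 3: monomial form of pTS and degree
lemma degree_single' (i k : ℕ) : (Finsupp.single i k).degree = k := by
  rcases Nat.eq_zero_or_pos k with rfl | hk
  · simp [Finsupp.degree]
  · exact Finsupp.degree_single i k

lemma degree_finset_sum {s : Finset ℕ} {f : ℕ → (ℕ →₀ ℕ)} :
    (∑ i ∈ s, f i).degree = ∑ i ∈ s, (f i).degree := by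
  simp only [Finsupp.degree_eq_weight_one]
  exact map_sum (Finsupp.weight 1) f s

lemma degree_mapDomain (g : ℕ → ℕ) (d : ℕ →₀ ℕ) :
    (Finsupp.mapDomain g d).degree = d.degree := by
  induction d using Finsupp.induction_linear with
  | zero => simp
  | add f₁ f₂ hf₁ hf₂ => rw [Finsupp.mapDomain_add, map_add, map_add, hf₁, hf₂]
  | single a b => rw [Finsupp.mapDomain_single, Finsupp.degree_single, Finsupp.degree_single]

lemma prod_monomial_one (s : Finset ℕ) (f : ℕ → (ℕ →₀ ℕ)) :
    (∏ i ∈ s, (monomial (f i) (1 : ℚ))) = monomial (∑ i ∈ s, f i) (1 : ℚ) := by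
  induction s using Finset.cons_induction with
  | empty => simp [monomial_zero']
  | cons a s ha ih => rw [Finset.prod_cons, Finset.sum_cons, ih, monomial_mul, one_mul]

-- Part 3b: exponent function and monomial form
def expF (n : ℕ) (S T : Tab) : ℕ → ℕ := fun i => ctEntry S (DsiSet n S) (posOf T i)

def expM (n : ℕ) (S T : Tab) : ℕ →₀ ℕ := ∑ i ∈ Finset.Icc 1 n, Finsupp.single i (expF n S T i)

lemma pTS_eq_monomial (n : ℕ) (S T : Tab) : pTS n T S = monomial (expM n S T) 1 := by
  rw [pTS, expM, ← prod_monomial_one]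
  exact Finset.prod_congr rfl fun i _ => X_pow_eq_monomial

lemma expM_apply_mem (n : ℕ) (S T : Tab) {i : ℕ} (hi : i ∈ Finset.Icc 1 n) :
    expM n S T i = expF n S T i := by
  rw [expM, Finsupp.finset_sum_apply]
  simp only [Finsupp.single_apply]
  rw [Finset.sum_ite_eq' (Finset.Icc 1 n) i (fun j => expF n S T j), if_pos hi]

lemma expM_degree (n : ℕ) (S T : Tab) :
    (expM n S T).degree = ∑ i ∈ Finset.Icc 1 n, expF n S T i := by
  rw [expM, degree_finset_sum]
  exact Finset.sum_congr rfl fun i _ => degree_single' _ _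

section Main
variable {n : ℕ} {μ : YoungDiagram} {S T : Tab}

lemma posOf_cell (hμ : μ.cells.card = n) (hT : IsFilling μ T) {i : ℕ}
    (hi : i ∈ Finset.Icc 1 n) : posOf T i ∈ μ.cells ∧ T (posOf T i) = i :=
  filling_posOf_mem hT (by rwa [hμ])

lemma sum_ct (hμ : μ.cells.card = n) (hT : IsFilling μ T) :
    ∑ i ∈ Finset.Icc 1 n, ctEntry S (DsiSet n S) (posOf T i)
      = ∑ b ∈ μ.cells, ctEntry S (DsiSet n S) b := by
  refine Finset.sum_nbij' (fun i => posOf T i) (fun b => T b) ?_ ?_ ?_ ?_ ?_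
  · exact fun i hi => (posOf_cell hμ hT hi).1
  · exact fun b hb => by rw [← hμ]; exact filling_val_mem hT hb
  · exact fun i hi => (posOf_cell hμ hT hi).2
  · exact fun b hb => filling_posOf hT hb
  · exact fun i hi => rfl

lemma expM_degree_cc (hμ : μ.cells.card = n) (hS : IsStandard μ S) (hT : IsFilling μ T) :
    (expM n S T).degree = ccStat n S := by
  rw [expM_degree, ccStat]
  show (∑ i ∈ Finset.Icc 1 n, ctEntry S (DsiSet n S) (posOf T i))
      = ∑ i ∈ Finset.Icc 1 n, ctEntry S (DsiSet n S) (posOf S i)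
  rw [sum_ct hμ hT, sum_ct hμ hS.1]

-- Part 4: the row/column groups at the `Fin n` level
lemma idx_one_mem (f : ℕ → ℕ) : ∀ i ∈ Finset.Icc 1 n, f (embedPerm n 1 i) = f i := by
  intro i _; rw [embedPerm_one]; rfl

lemma idx_mul_mem {f : ℕ → ℕ} {σ τ : Equiv.Perm (Fin n)}
    (hσ : ∀ i ∈ Finset.Icc 1 n, f (embedPerm n σ i) = f i)
    (hτ : ∀ i ∈ Finset.Icc 1 n, f (embedPerm n τ i) = f i) :
    ∀ i ∈ Finset.Icc 1 n, f (embedPerm n (σ * τ) i) = f i := by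
  intro i hi
  rw [embedPerm_mul, Equiv.Perm.mul_apply, hσ _ (embedPerm_mem n τ hi), hτ _ hi]

lemma idx_inv_mem {f : ℕ → ℕ} {σ : Equiv.Perm (Fin n)}
    (hσ : ∀ i ∈ Finset.Icc 1 n, f (embedPerm n σ i) = f i) :
    ∀ i ∈ Finset.Icc 1 n, f (embedPerm n σ⁻¹ i) = f i := by
  intro i hi
  have hj : embedPerm n σ⁻¹ i ∈ Finset.Icc 1 n := embedPerm_mem n σ⁻¹ hi
  have := hσ _ hj
  rw [embedPerm_inv] at hj ⊢
  have := hσ _ hj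
  rw [show ∀ j, embedPerm n σ ((embedPerm n σ)⁻¹ j) = j from (embedPerm n σ).apply_symm_apply] at this
  exact this.symm

lemma mem_rowFinset {τ : Equiv.Perm (Fin n)} :
    τ ∈ rowFinset n T ↔ ∀ i ∈ Finset.Icc 1 n, rowIdx T (embedPerm n τ i) = rowIdx T i := by
  simp [rowFinset]

lemma mem_colFinset {σ : Equiv.Perm (Fin n)} :
    σ ∈ colFinset n T ↔ ∀ i ∈ Finset.Icc 1 n, colIdx T (embedPerm n σ i) = colIdx T i := by
  simp [colFinset]

lemma one_mem_rowFinset : (1 : Equiv.Perm (Fin n)) ∈ rowFinset n T :=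
  mem_rowFinset.2 (idx_one_mem _)

lemma mul_mem_rowFinset {σ τ : Equiv.Perm (Fin n)} (hσ : σ ∈ rowFinset n T)
    (hτ : τ ∈ rowFinset n T) : σ * τ ∈ rowFinset n T :=
  mem_rowFinset.2 (idx_mul_mem (mem_rowFinset.1 hσ) (mem_rowFinset.1 hτ))

lemma inv_mem_rowFinset {σ : Equiv.Perm (Fin n)} (hσ : σ ∈ rowFinset n T) :
    σ⁻¹ ∈ rowFinset n T :=
  mem_rowFinset.2 (idx_inv_mem (mem_rowFinset.1 hσ))

lemma one_mem_colFinset : (1 : Equiv.Perm (Fin n)) ∈ colFinset n T :=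
  mem_colFinset.2 (idx_one_mem _)

lemma mul_mem_colFinset {σ τ : Equiv.Perm (Fin n)} (hσ : σ ∈ colFinset n T)
    (hτ : τ ∈ colFinset n T) : σ * τ ∈ colFinset n T :=
  mem_colFinset.2 (idx_mul_mem (mem_colFinset.1 hσ) (mem_colFinset.1 hτ))

lemma inv_mem_colFinset {σ : Equiv.Perm (Fin n)} (hσ : σ ∈ colFinset n T) :
    σ⁻¹ ∈ colFinset n T :=
  mem_colFinset.2 (idx_inv_mem (mem_colFinset.1 hσ))

-- the stabilizer
lemma mapDomain_perm_eq_iff (u : Equiv.Perm ℕ) (a b : ℕ →₀ ℕ) :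
    Finsupp.mapDomain ⇑u a = b ↔ a = Finsupp.mapDomain ⇑u⁻¹ b := by
  have key : ∀ (v : Equiv.Perm ℕ) (c : ℕ →₀ ℕ),
      Finsupp.mapDomain ⇑v⁻¹ (Finsupp.mapDomain ⇑v c) = c := by
    intro v c
    rw [← Finsupp.mapDomain_comp]
    have : ⇑v⁻¹ ∘ ⇑v = id := by funext x; exact v.symm_apply_apply x
    rw [this, Finsupp.mapDomain_id]
  constructor
  · rintro rfl; rw [key]
  · rintro rfl
    have := key u⁻¹ b
    rwa [inv_inv] at this

def stabFinset (n : ℕ) (S T : Tab) : Finset (Equiv.Perm (Fin n)) :=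
  (rowFinset n T).filter fun τ =>
    Finsupp.mapDomain ⇑(embedPerm n τ) (expM n S T) = expM n S T

lemma sTS_eq_card : sTS n T S = (stabFinset n S T).card := by
  rw [sTS, stabFinset]
  congr 1
  apply Finset.filter_congr
  intro τ _
  rw [pTS_eq_monomial, rename_monomial]
  constructor
  · intro h
    simpa using monomial_left_injective (one_ne_zero) h
  · intro h; simp [h]

lemma stab_pos : 0 < (stabFinset n S T).card := by
  apply Finset.card_pos.2
  refine ⟨1, Finset.mem_filter.2 ⟨one_mem_rowFinset, ?_⟩⟩
  rw [embedPerm_one]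
  have : ⇑(1 : Equiv.Perm ℕ) = id := rfl
  rw [this, Finsupp.mapDomain_id]

lemma fiber_card (d : ℕ →₀ ℕ) :
    ((rowFinset n T).filter fun τ =>
        Finsupp.mapDomain ⇑(embedPerm n τ) (expM n S T) = d).card = 0 ∨
    ((rowFinset n T).filter fun τ =>
        Finsupp.mapDomain ⇑(embedPerm n τ) (expM n S T) = d).card
      = (stabFinset n S T).card := by
  set Fib := (rowFinset n T).filter fun τ =>
    Finsupp.mapDomain ⇑(embedPerm n τ) (expM n S T) = d with hFib
  rcases Finset.eq_empty_or_nonempty Fib with h | ⟨τ₀, hτ₀⟩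
  · left; rw [h]; rfl
  right
  have hτ₀' := Finset.mem_filter.1 hτ₀
  symm
  refine Finset.card_bij' (fun δ _ => τ₀ * δ) (fun τ _ => τ₀⁻¹ * τ) ?_ ?_ ?_ ?_
  · intro δ hδ
    have hδ' := Finset.mem_filter.1 hδ
    refine Finset.mem_filter.2 ⟨mul_mem_rowFinset hτ₀'.1 hδ'.1, ?_⟩
    rw [embedPerm_mul, Equiv.Perm.coe_mul, Finsupp.mapDomain_comp, hδ'.2, hτ₀'.2]
  · intro τ hτ
    have hτ' := Finset.mem_filter.1 hτ
    refine Finset.mem_filter.2 ⟨mul_mem_rowFinset (inv_mem_rowFinset hτ₀'.1) hτ'.1, ?_⟩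
    rw [embedPerm_mul, Equiv.Perm.coe_mul, Finsupp.mapDomain_comp, hτ'.2, embedPerm_inv,
      ← hτ₀'.2, mapDomain_perm_eq_iff, inv_inv]
  · intro δ _; group
  · intro τ _; group

end Main

-- Part 4b: coefficient formula
def cntF (n : ℕ) (S T : Tab) (σ : Equiv.Perm (Fin n)) (m : ℕ →₀ ℕ) : ℕ :=
  ((rowFinset n T).filter fun τ =>
    Finsupp.mapDomain ⇑(embedPerm n τ) (expM n S T)
      = Finsupp.mapDomain ⇑(embedPerm n σ)⁻¹ m).card

section Main2
variable {n : ℕ} {μ : YoungDiagram} {S T : Tab}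

lemma coeff_FTS (m : ℕ →₀ ℕ) :
    coeff m (FTS n T S) = ((sTS n T S : ℚ))⁻¹ *
      ∑ σ ∈ colFinset n T, ((Equiv.Perm.sign σ : ℤ) : ℚ) * (cntF n S T σ m : ℚ) := by
  rw [FTS, coeff_smul, smul_eq_mul]
  congr 1
  rw [epsAct, pTS_eq_monomial]
  rw [coeff_sum]
  refine Finset.sum_congr rfl fun σ _ => ?_
  rw [coeff_sum]
  have : ∀ τ ∈ rowFinset n T,
      coeff m ((Equiv.Perm.sign σ : ℤ) •
        rename (⇑(embedPerm n σ * embedPerm n τ)) (monomial (expM n S T) (1 : ℚ)))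
      = ((Equiv.Perm.sign σ : ℤ) : ℚ) *
        (if Finsupp.mapDomain ⇑(embedPerm n τ) (expM n S T)
            = Finsupp.mapDomain ⇑(embedPerm n σ)⁻¹ m then 1 else 0) := by
    intro τ _
    rw [coeff_smul, rename_monomial, coeff_monomial]
    simp only [Equiv.Perm.coe_mul, Finsupp.mapDomain_comp, mapDomain_perm_eq_iff,
      zsmul_eq_mul]
  rw [Finset.sum_congr rfl this, ← Finset.mul_sum]
  congr 1
  rw [Finset.sum_boole]
  rfl

lemma coeff_FTS_int (m : ℕ →₀ ℕ) : ∃ z : ℤ, coeff m (FTS n T S) = (z : ℚ) := by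
  set s := (stabFinset n S T).card with hs
  have hs0 : (0 : ℚ) < (s : ℚ) := by exact_mod_cast stab_pos
  refine ⟨∑ σ ∈ colFinset n T, (Equiv.Perm.sign σ : ℤ) * ((cntF n S T σ m / s : ℕ) : ℤ), ?_⟩
  have hdiv : ∀ σ : Equiv.Perm (Fin n),
      (cntF n S T σ m : ℚ) = (s : ℚ) * ((cntF n S T σ m / s : ℕ) : ℚ) := by
    intro σ
    have : s ∣ cntF n S T σ m := by
      rcases fiber_card (S := S) (T := T) (Finsupp.mapDomain ⇑(embedPerm n σ)⁻¹ m) with h | h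
      · rw [cntF, h]; exact Dvd.intro 0 rfl
      · rw [cntF, h]
    rw [← Nat.cast_mul, Nat.mul_div_cancel' this]
  have key : ∑ σ ∈ colFinset n T, ((Equiv.Perm.sign σ : ℤ) : ℚ) * (cntF n S T σ m : ℚ)
      = (s : ℚ) * ∑ σ ∈ colFinset n T,
          ((Equiv.Perm.sign σ : ℤ) : ℚ) * ((cntF n S T σ m / s : ℕ) : ℚ) := by
    rw [Finset.mul_sum]
    refine Finset.sum_congr rfl fun σ _ => ?_
    rw [hdiv σ]; ring
  rw [coeff_FTS, sTS_eq_card, ← hs, key, ← mul_assoc, inv_mul_cancel₀ (ne_of_gt hs0), one_mul]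
  push_cast
  rfl

lemma isHomog_smul {M : Type*} [SMulZeroClass M ℚ] (c : M) {p : MvPolynomial ℕ ℚ} {k : ℕ}
    (h : p.IsHomogeneous k) : (c • p).IsHomogeneous k := by
  intro d hd
  apply h
  intro h0
  rw [coeff_smul, h0, smul_zero] at hd
  exact hd rfl

lemma FTS_homog (hμ : μ.cells.card = n) (hS : IsStandard μ S) (hT : IsFilling μ T) :
    (FTS n T S).IsHomogeneous (ccStat n S) := by
  rw [FTS]
  apply isHomog_smul
  rw [epsAct, pTS_eq_monomial]
  apply MvPolynomial.IsHomogeneous.sum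
  intro σ _
  apply MvPolynomial.IsHomogeneous.sum
  intro τ _
  apply isHomog_smul
  rw [rename_monomial]
  exact isHomogeneous_monomial _ (by rw [degree_mapDomain, expM_degree_cc hμ hS hT])

end Main2

-- Part 4c: rearrangement inequality
lemma mul_rearrange_ineq {a b c d : ℕ} (hb : b < a) (hd : d < c) :
    a * d + b * c < a * c + b * d := by
  obtain ⟨x, hx⟩ := Nat.exists_eq_add_of_lt hb
  obtain ⟨y, hy⟩ := Nat.exists_eq_add_of_lt hd
  subst hx hy
  ring_nf
  omega

lemma rearrange (N : ℕ) : ∀ s : Finset ℕ, s.card = N → ∀ e r v : ℕ → ℕ,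
    (∀ i ∈ s, v i ∈ s) → (∀ i ∈ s, ∀ j ∈ s, v i = v j → i = j) →
    (∀ i ∈ s, ∀ j ∈ s, (e i < e j ↔ r i < r j)) →
    (∀ i ∈ s, ∀ j ∈ s, r i = r j → i = j) →
    (∑ i ∈ s, e i * r (v i) ≤ ∑ i ∈ s, e i * r i) ∧
    ((∑ i ∈ s, e i * r (v i)) = (∑ i ∈ s, e i * r i) → ∀ i ∈ s, v i = i) := by
  induction N using Nat.strong_induction_on with
  | _ N IH =>
  intro s hcard e r v hmaps hinj hiff hrinj
  rcases Finset.eq_empty_or_nonempty s with rfl | hne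
  · simp
  obtain ⟨i₀, hi₀, hmax⟩ := Finset.exists_max_image s r hne
  have hN : 1 ≤ N := by
    rw [← hcard]
    exact Finset.card_pos.2 hne
  have step : ∀ u : ℕ → ℕ, (∀ i ∈ s, u i ∈ s) → (∀ i ∈ s, ∀ j ∈ s, u i = u j → i = j) →
      u i₀ = i₀ →
      (∑ i ∈ s, e i * r (u i) ≤ ∑ i ∈ s, e i * r i) ∧
      ((∑ i ∈ s, e i * r (u i)) = (∑ i ∈ s, e i * r i) → ∀ i ∈ s, u i = i) := by
    intro u hm hj hfix
    have hcard' : (s.erase i₀).card < N := by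
      rw [Finset.card_erase_of_mem hi₀, hcard]; omega
    have herase : ∀ i ∈ s.erase i₀, i ∈ s := fun i hi => Finset.mem_of_mem_erase hi
    have hm' : ∀ i ∈ s.erase i₀, u i ∈ s.erase i₀ := by
      intro i hi
      have his := herase i hi
      refine Finset.mem_erase.2 ⟨?_, hm i his⟩
      intro hui
      have : i = i₀ := hj i his i₀ hi₀ (by rw [hui, hfix])
      exact (Finset.mem_erase.1 hi).1 this
    obtain ⟨hle', heq'⟩ := IH _ hcard' (s.erase i₀) rfl e r u hm'
      (fun i hi j hj' h => hj i (herase i hi) j (herase j hj') h)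
      (fun i hi j hj' => hiff i (herase i hi) j (herase j hj'))
      (fun i hi j hj' h => hrinj i (herase i hi) j (herase j hj') h)
    rw [← Finset.sum_erase_add s _ hi₀, ← Finset.sum_erase_add s (fun i => e i * r i) hi₀]
    constructor
    · exact Nat.add_le_add hle' (by rw [hfix])
    · intro heq
      rw [hfix] at heq
      have h2 := Nat.add_right_cancel heq
      intro i hi
      rcases eq_or_ne i i₀ with rfl | hne'
      · exact hfix
      · exact heq' h2 i (Finset.mem_erase.2 ⟨hne', hi⟩)
  by_cases hfix : v i₀ = i₀
  · exact step v hmaps hinj hfix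
  · -- find preimage j₀ of i₀
    have himg : Finset.image v s = s := by
      apply Finset.eq_of_subset_of_card_le
      · intro x hx
        obtain ⟨i, hi, rfl⟩ := Finset.mem_image.1 hx
        exact hmaps i hi
      · rw [Finset.card_image_of_injOn (fun i hi j hj h => hinj i hi j hj h)]
    obtain ⟨j₀, hj₀, hvj₀⟩ := Finset.mem_image.1 (himg ▸ hi₀)
    have hj₀ne : j₀ ≠ i₀ := by intro h; rw [h] at hvj₀; exact hfix hvj₀
    set v' := fun i => v ((Equiv.swap i₀ j₀) i) with hv'
    have hswap : ∀ i ∈ s, (Equiv.swap i₀ j₀) i ∈ s := by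
      intro i hi
      rcases eq_or_ne i i₀ with rfl | h1
      · rw [Equiv.swap_apply_left]; exact hj₀
      rcases eq_or_ne i j₀ with rfl | h2
      · rw [Equiv.swap_apply_right]; exact hi₀
      · rw [Equiv.swap_apply_of_ne_of_ne h1 h2]; exact hi
    have hm' : ∀ i ∈ s, v' i ∈ s := fun i hi => hmaps _ (hswap i hi)
    have hj' : ∀ i ∈ s, ∀ j ∈ s, v' i = v' j → i = j := by
      intro i hi j hj h
      have := hinj _ (hswap i hi) _ (hswap j hj) h
      exact (Equiv.swap i₀ j₀).injective this
    have hfix' : v' i₀ = i₀ := by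
      show v ((Equiv.swap i₀ j₀) i₀) = i₀
      rw [Equiv.swap_apply_left]; exact hvj₀
    obtain ⟨hle', _⟩ := step v' hm' hj' hfix'
    -- strict inequality between the v-sum and the v'-sum
    have hji : j₀ ∈ s.erase i₀ := Finset.mem_erase.2 ⟨hj₀ne, hj₀⟩
    have hvi₀s : v i₀ ∈ s := hmaps i₀ hi₀
    have hrv : r (v i₀) < r i₀ := by
      rcases lt_or_eq_of_le (hmax _ hvi₀s) with h | h
      · exact h
      · exact absurd (hrinj _ hvi₀s _ hi₀ h) hfix
    have hej : e j₀ < e i₀ := by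
      rw [hiff j₀ hj₀ i₀ hi₀]
      rcases lt_or_eq_of_le (hmax _ hj₀) with h | h
      · exact h
      · exact absurd (hrinj _ hj₀ _ hi₀ h) hj₀ne
    have hstrict : (∑ i ∈ s, e i * r (v i)) < ∑ i ∈ s, e i * r (v' i) := by
      rw [← Finset.sum_erase_add s _ hi₀, ← Finset.sum_erase_add s (fun i => e i * r (v' i)) hi₀,
        ← Finset.sum_erase_add (s.erase i₀) _ hji,
        ← Finset.sum_erase_add (s.erase i₀) (fun i => e i * r (v' i)) hji]
      have hrest : ∀ i ∈ (s.erase i₀).erase j₀, e i * r (v' i) = e i * r (v i) := by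
        intro i hi
        have h2 := Finset.mem_erase.1 hi
        have h1 := Finset.mem_erase.1 h2.2
        show e i * r (v ((Equiv.swap i₀ j₀) i)) = e i * r (v i)
        rw [Equiv.swap_apply_of_ne_of_ne h1.1 h2.1]
      rw [Finset.sum_congr rfl hrest]
      have hv'j₀ : v' j₀ = v i₀ := by
        show v ((Equiv.swap i₀ j₀) j₀) = v i₀
        rw [Equiv.swap_apply_right]
      rw [hv'j₀, hfix', hvj₀]
      have := mul_rearrange_ineq hej hrv
      omega
    have hle2 : (∑ i ∈ s, e i * r (v i)) < ∑ i ∈ s, e i * r i := lt_of_lt_of_le hstrict hle'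
    exact ⟨le_of_lt hle2, fun h => absurd h (ne_of_lt hle2)⟩

section Main3
variable {n : ℕ} {μ : YoungDiagram} {S T : Tab}

lemma expF_iff_row (hμ : μ.cells.card = n) (hS : IsStandard μ S) (hT : IsFilling μ T)
    {i j : ℕ} (hi : i ∈ Finset.Icc 1 n) (hj : j ∈ Finset.Icc 1 n)
    (hc : colIdx T i = colIdx T j) :
    (expF n S T i < expF n S T j ↔ rowIdx T i < rowIdx T j) := by
  have hbi := posOf_cell hμ hT hi
  have hbj := posOf_cell hμ hT hj
  have hmono : ∀ a b : ℕ, a ∈ Finset.Icc 1 n → b ∈ Finset.Icc 1 n → colIdx T a = colIdx T b →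
      rowIdx T a < rowIdx T b → expF n S T a < expF n S T b := by
    intro a b ha hb hcab hrab
    exact ct_strict_col hμ hS (posOf_cell hμ hT ha).1 (posOf_cell hμ hT hb).1 hcab hrab
  constructor
  · intro hE
    rcases lt_trichotomy (rowIdx T i) (rowIdx T j) with h | h | h
    · exact h
    · exfalso
      have hpos : posOf T i = posOf T j := by rw [posOf, posOf, h, hc]
      have : i = j := by rw [← hbi.2, ← hbj.2, hpos]
      rw [this] at hE; omega
    · have := hmono j i hj hi hc.symm h
      omega
  · exact hmono i j hi hj hc

lemma row_col_inj (hμ : μ.cells.card = n) (hT : IsFilling μ T)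
    {i j : ℕ} (hi : i ∈ Finset.Icc 1 n) (hj : j ∈ Finset.Icc 1 n)
    (hr : rowIdx T i = rowIdx T j) (hc : colIdx T i = colIdx T j) : i = j := by
  have hbi := posOf_cell hμ hT hi
  have hbj := posOf_cell hμ hT hj
  have hpos : posOf T i = posOf T j := by rw [posOf, posOf, hr, hc]
  rw [← hbi.2, ← hbj.2, hpos]

lemma sigma_eq_one (hμ : μ.cells.card = n) (hS : IsStandard μ S) (hT : IsFilling μ T)
    {σ τ : Equiv.Perm (Fin n)} (hσ : σ ∈ colFinset n T) (hτ : τ ∈ rowFinset n T)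
    (h : Finsupp.mapDomain ⇑(embedPerm n σ * embedPerm n τ) (expM n S T) = expM n S T) :
    σ = 1 := by
  set u := embedPerm n σ with hu
  set t := embedPerm n τ with ht
  have hgmem : ∀ i ∈ Finset.Icc 1 n, (u * t) i ∈ Finset.Icc 1 n := by
    intro i hi
    rw [Equiv.Perm.mul_apply]
    exact embedPerm_mem n σ (embedPerm_mem n τ hi)
  have hE : ∀ i ∈ Finset.Icc 1 n, expF n S T ((u * t) i) = expF n S T i := by
    intro i hi
    have h1 := Finsupp.mapDomain_apply (u * t).injective (expM n S T) i
    rw [h] at h1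
    rw [← expM_apply_mem n S T (hgmem i hi), h1, expM_apply_mem n S T hi]
  have huinv : ∀ i ∈ Finset.Icc 1 n, u⁻¹ i ∈ Finset.Icc 1 n := by
    intro i hi
    rw [hu, ← embedPerm_inv]
    exact embedPerm_mem n σ⁻¹ hi
  have hucol : ∀ i ∈ Finset.Icc 1 n, colIdx T (u⁻¹ i) = colIdx T i := by
    intro i hi
    have := mem_colFinset.1 (inv_mem_colFinset hσ) i hi
    rwa [embedPerm_inv, ← hu] at this
  -- global equality of the two weighted sums
  have eq1 : ∑ i ∈ Finset.Icc 1 n, expF n S T i * rowIdx T i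
      = ∑ i ∈ Finset.Icc 1 n, expF n S T i * rowIdx T (u⁻¹ i) := by
    have e1 : ∑ i ∈ Finset.Icc 1 n, expF n S T i * rowIdx T i
        = ∑ i ∈ Finset.Icc 1 n, expF n S T ((u * t) i) * rowIdx T i :=
      Finset.sum_congr rfl fun i hi => by rw [hE i hi]
    rw [e1]
    have hg : embedPerm n (σ * τ) = u * t := embedPerm_mul n σ τ
    refine Finset.sum_nbij' (fun i => (u * t) i) (fun j => (u * t)⁻¹ j) hgmem ?_ ?_ ?_ ?_
    · intro j hj
      show (u * t)⁻¹ j ∈ Finset.Icc 1 n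
      rw [← hg, ← embedPerm_inv]
      exact embedPerm_mem n (σ * τ)⁻¹ hj
    · intro i _; exact (u * t).symm_apply_apply i
    · intro j _; exact (u * t).apply_symm_apply j
    · intro i hi
      show expF n S T ((u * t) i) * rowIdx T i
        = expF n S T ((u * t) i) * rowIdx T (u⁻¹ ((u * t) i))
      congr 1
      have h3 : u⁻¹ ((u * t) i) = t i := by
        rw [Equiv.Perm.mul_apply, show ∀ j, u⁻¹ (u j) = j from u.symm_apply_apply]
      rw [h3, ht]
      exact (mem_rowFinset.1 hτ i hi).symm
  -- fiberwise comparison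
  have key : ∀ i ∈ Finset.Icc 1 n, u⁻¹ i = i := by
    have hRL : ∀ c : ℕ, ((Finset.Icc 1 n).filter fun i => colIdx T i = c).card =
        ((Finset.Icc 1 n).filter fun i => colIdx T i = c).card → True := fun _ _ => trivial
    -- apply the rearrangement lemma on each column fiber
    set sc := fun c => (Finset.Icc 1 n).filter fun i => colIdx T i = c with hsc
    have hcond : ∀ c : ℕ,
        (∑ i ∈ sc c, expF n S T i * rowIdx T (u⁻¹ i) ≤ ∑ i ∈ sc c, expF n S T i * rowIdx T i) ∧
        ((∑ i ∈ sc c, expF n S T i * rowIdx T (u⁻¹ i)) = (∑ i ∈ sc c, expF n S T i * rowIdx T i)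
          → ∀ i ∈ sc c, u⁻¹ i = i) := by
      intro c
      apply rearrange (sc c).card (sc c) rfl
      · intro i hi
        have hi' := Finset.mem_filter.1 hi
        exact Finset.mem_filter.2 ⟨huinv i hi'.1, by rw [hucol i hi'.1, hi'.2]⟩
      · intro i _ j _ hij
        exact u⁻¹.injective hij
      · intro i hi j hj
        have hi' := Finset.mem_filter.1 hi
        have hj' := Finset.mem_filter.1 hj
        exact expF_iff_row hμ hS hT hi'.1 hj'.1 (by rw [hi'.2, hj'.2])
      · intro i hi j hj hr
        have hi' := Finset.mem_filter.1 hi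
        have hj' := Finset.mem_filter.1 hj
        exact row_col_inj hμ hT hi'.1 hj'.1 hr (by rw [hi'.2, hj'.2])
    have hmapsto : ∀ i ∈ Finset.Icc 1 n, colIdx T i ∈ (Finset.Icc 1 n).image (colIdx T) :=
      fun i hi => Finset.mem_image_of_mem _ hi
    have hsplit1 := Finset.sum_fiberwise_of_maps_to hmapsto
      (fun i => expF n S T i * rowIdx T (u⁻¹ i))
    have hsplit2 := Finset.sum_fiberwise_of_maps_to hmapsto
      (fun i => expF n S T i * rowIdx T i)
    have heqsum : ∑ c ∈ (Finset.Icc 1 n).image (colIdx T),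
        ∑ i ∈ sc c, expF n S T i * rowIdx T (u⁻¹ i)
        = ∑ c ∈ (Finset.Icc 1 n).image (colIdx T), ∑ i ∈ sc c, expF n S T i * rowIdx T i := by
      rw [hsc]
      rw [hsplit1, hsplit2, ← eq1]
    have hper := (Finset.sum_eq_sum_iff_of_le
      (fun c _ => (hcond c).1)).1 heqsum
    intro i hi
    have hc : colIdx T i ∈ (Finset.Icc 1 n).image (colIdx T) := hmapsto i hi
    exact (hcond (colIdx T i)).2 (hper _ hc) i (Finset.mem_filter.2 ⟨hi, rfl⟩)
  have huone : u⁻¹ = 1 := by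
    ext j
    by_cases hj : j ∈ Finset.Icc 1 n
    · rw [key j hj]; rfl
    · have : u⁻¹ = embedPerm n σ⁻¹ := by rw [hu, embedPerm_inv]
      rw [this, embedPerm_apply_not n σ⁻¹ (by simpa [Finset.mem_Icc] using hj)]; rfl
  have : embedPerm n σ⁻¹ = embedPerm n 1 := by
    rw [embedPerm_inv, embedPerm_one, ← hu, huone]
  have := embedPerm_injective n this
  rwa [inv_eq_one] at this

end Main3

section Main4
variable {n : ℕ} {μ : YoungDiagram} {S T : Tab}

lemma cnt_one : cntF n S T 1 (expM n S T) = (stabFinset n S T).card := by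
  rw [cntF, stabFinset]
  congr 1
  apply Finset.filter_congr
  intro τ _
  have : Finsupp.mapDomain ⇑(embedPerm n (1 : Equiv.Perm (Fin n)))⁻¹ (expM n S T)
      = expM n S T := by
    rw [embedPerm_one, inv_one]
    show Finsupp.mapDomain id (expM n S T) = expM n S T
    rw [Finsupp.mapDomain_id]
  rw [this]

lemma cnt_ne_one (hμ : μ.cells.card = n) (hS : IsStandard μ S) (hT : IsFilling μ T)
    {σ : Equiv.Perm (Fin n)} (hσ : σ ∈ colFinset n T) (hne : σ ≠ 1) :
    cntF n S T σ (expM n S T) = 0 := by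
  rw [cntF, Finset.card_eq_zero, Finset.filter_eq_empty_iff]
  intro τ hτ hcond
  apply hne
  apply sigma_eq_one hμ hS hT hσ hτ
  rw [Equiv.Perm.coe_mul, Finsupp.mapDomain_comp, hcond, ← Finsupp.mapDomain_comp]
  have : ⇑(embedPerm n σ) ∘ ⇑(embedPerm n σ)⁻¹ = id := by
    funext x; exact (embedPerm n σ).apply_symm_apply x
  rw [this, Finsupp.mapDomain_id]

lemma coeff_FTS_self (hμ : μ.cells.card = n) (hS : IsStandard μ S) (hT : IsFilling μ T) :
    coeff (expM n S T) (FTS n T S) = 1 := by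
  rw [coeff_FTS, sTS_eq_card]
  have hsum : ∑ σ ∈ colFinset n T,
      ((Equiv.Perm.sign σ : ℤ) : ℚ) * (cntF n S T σ (expM n S T) : ℚ)
      = ((stabFinset n S T).card : ℚ) := by
    rw [Finset.sum_eq_single (1 : Equiv.Perm (Fin n))]
    · rw [Equiv.Perm.sign_one, cnt_one]; push_cast; ring
    · intro σ hσ hne
      rw [cnt_ne_one hμ hS hT hσ hne]
      push_cast; ring
    · intro h
      exact absurd one_mem_colFinset h
  rw [hsum, inv_mul_cancel₀]
  have := stab_pos (n := n) (S := S) (T := T)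
  positivity
end Main4

-- Part 5a: column structure
section Cols
variable {n : ℕ} {μ : YoungDiagram} {T : Tab}

lemma cell_col_lt (hμ : μ.cells.card = n) {b : ℕ × ℕ} (hb : b ∈ μ.cells) : b.2 < n := by
  have hsub : ∀ j ∈ Finset.range (b.2 + 1), ((0 : ℕ), j) ∈ μ.cells := by
    intro j hj
    rw [YoungDiagram.mem_cells] at hb ⊢
    exact μ.up_left_mem (Nat.zero_le _) (by simpa [Nat.lt_succ_iff] using hj) (by rwa [Prod.mk.eta])
  have := Finset.card_le_card_of_injOn (fun j => ((0 : ℕ), j)) hsub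
    (fun x _ y _ h => by simpa using h)
  rw [Finset.card_range, hμ] at this
  omega

lemma colLen_le_n (hμ : μ.cells.card = n) {c : ℕ} : μ.colLen c ≤ n := by
  rcases Nat.eq_zero_or_pos (μ.colLen c) with h | h
  · omega
  have : ((0 : ℕ), c) ∈ μ.cells := by
    rw [YoungDiagram.mem_cells]
    exact YoungDiagram.mem_iff_lt_colLen.2 h
  have hsub : ∀ j ∈ Finset.range (μ.colLen c), (j, c) ∈ μ.cells := by
    intro j hj
    rw [YoungDiagram.mem_cells]
    exact YoungDiagram.mem_iff_lt_colLen.2 (by simpa using hj)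
  have := Finset.card_le_card_of_injOn (fun j => (j, c)) hsub
    (fun x _ y _ h => by simpa using h)
  rwa [Finset.card_range, hμ] at this

lemma colLenT_eq (hμ : μ.cells.card = n) (hT : IsFilling μ T) (c : ℕ) :
    colLenT n T c = μ.colLen c := by
  rw [colLenT]
  have hch : ∀ r : ℕ, (T (r, c) ≠ 0 ↔ r < μ.colLen c) := by
    intro r
    constructor
    · intro h
      by_contra hc
      have : (r, c) ∉ μ.cells := by
        rw [YoungDiagram.mem_cells]
        intro hm
        exact hc (YoungDiagram.mem_iff_lt_colLen.1 hm)
      exact h (hT.1 _ this)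
    · intro h
      have hm : (r, c) ∈ μ.cells := by
        rw [YoungDiagram.mem_cells]; exact YoungDiagram.mem_iff_lt_colLen.2 h
      have := filling_val_mem hT hm
      simp only [Finset.mem_Icc] at this
      omega
  have : (Finset.range (n + 1)).filter (fun r => T (r, c) ≠ 0)
      = Finset.range (μ.colLen c) := by
    ext r
    simp only [Finset.mem_filter, Finset.mem_range, hch]
    have := colLen_le_n (μ := μ) (c := c) hμ
    omega
  rw [this, Finset.card_range]

lemma lower_eq_range {s : Finset ℕ} (hlow : ∀ c ∈ s, ∀ c' < c, c' ∈ s) :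
    ∀ c, c ∈ s ↔ c < s.card := by
  rcases Finset.eq_empty_or_nonempty s with rfl | hne
  · simp
  have hM := s.max'_mem hne
  have hall : s = Finset.range (s.max' hne + 1) := by
    ext c
    simp only [Finset.mem_range, Nat.lt_succ_iff]
    constructor
    · exact fun hc => s.le_max' c hc
    · intro hc
      rcases lt_or_eq_of_le hc with h | h
      · exact hlow _ hM c h
      · rwa [h]
  intro c
  rw [hall, Finset.card_range, Finset.mem_range]

lemma qaT_iff (hμ : μ.cells.card = n) (hT : IsFilling μ T) (a : ℕ) :
    ∀ c, a < μ.colLen c ↔ c < qaT n T a := by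
  have hq : qaT n T a = ((Finset.range (n + 1)).filter fun c => a < μ.colLen c).card := by
    rw [qaT]
    congr 1
    apply Finset.filter_congr
    intro c _
    rw [colLenT_eq hμ hT]
  rw [hq]
  have hlow : ∀ c ∈ (Finset.range (n + 1)).filter (fun c => a < μ.colLen c),
      ∀ c' < c, c' ∈ (Finset.range (n + 1)).filter (fun c => a < μ.colLen c) := by
    intro c hc c' hc'
    simp only [Finset.mem_filter, Finset.mem_range] at hc ⊢
    have := μ.colLen_anti c' c (le_of_lt hc')
    constructor
    · omega
    · omega
  have hiff := lower_eq_range hlow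
  intro c
  rw [← hiff c]
  simp only [Finset.mem_filter, Finset.mem_range]
  constructor
  · intro h
    refine ⟨?_, h⟩
    have hmem : ((0 : ℕ), c) ∈ μ.cells := by
      rw [YoungDiagram.mem_cells]
      exact YoungDiagram.mem_iff_lt_colLen.2 (by omega)
    have := cell_col_lt hμ hmem
    omega
  · exact fun h => h.2

lemma qt_iff (hμ : μ.cells.card = n) (hT : IsFilling μ T) {a : ℕ} (ha : 1 ≤ a) :
    ∀ c, a ≤ μ.colLen c ↔ c < qaT n T a + taT n T a := by
  have hq : qaT n T a = ((Finset.range (n + 1)).filter fun c => a < μ.colLen c).card := by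
    rw [qaT]; congr 1; apply Finset.filter_congr; intro c _; rw [colLenT_eq hμ hT]
  have ht : taT n T a = ((Finset.range (n + 1)).filter fun c => μ.colLen c = a).card := by
    rw [taT]; congr 1; apply Finset.filter_congr; intro c _
    rw [colLenT_eq hμ hT]
  have hcard : qaT n T a + taT n T a
      = ((Finset.range (n + 1)).filter fun c => a ≤ μ.colLen c).card := by
    rw [hq, ht, ← Finset.card_union_of_disjoint]
    · congr 1
      ext c
      simp only [Finset.mem_union, Finset.mem_filter, Finset.mem_range]
      constructor
      · rintro (⟨h1, h2⟩ | ⟨h1, h2⟩) <;> exact ⟨h1, by omega⟩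
      · rintro ⟨h1, h2⟩
        rcases lt_or_eq_of_le h2 with h | h
        · exact Or.inl ⟨h1, h⟩
        · exact Or.inr ⟨h1, h.symm⟩
    · rw [Finset.disjoint_left]
      intro c hc1 hc2
      simp only [Finset.mem_filter] at hc1 hc2
      omega
  rw [hcard]
  have hlow : ∀ c ∈ (Finset.range (n + 1)).filter (fun c => a ≤ μ.colLen c),
      ∀ c' < c, c' ∈ (Finset.range (n + 1)).filter (fun c => a ≤ μ.colLen c) := by
    intro c hc c' hc'
    simp only [Finset.mem_filter, Finset.mem_range] at hc ⊢
    have := μ.colLen_anti c' c (le_of_lt hc')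
    omega
  have hiff := lower_eq_range hlow
  intro c
  rw [← hiff c]
  simp only [Finset.mem_filter, Finset.mem_range]
  constructor
  · intro h
    refine ⟨?_, h⟩
    have hmem : ((0 : ℕ), c) ∈ μ.cells := by
      rw [YoungDiagram.mem_cells]
      exact YoungDiagram.mem_iff_lt_colLen.2 (by omega)
    have := cell_col_lt hμ hmem
    omega
  · exact fun h => h.2

lemma colLen_block (hμ : μ.cells.card = n) (hT : IsFilling μ T) {a : ℕ} (ha : 1 ≤ a) :
    ∀ c, μ.colLen c = a ↔ (qaT n T a ≤ c ∧ c < qaT n T a + taT n T a) := by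
  intro c
  have h1 := qaT_iff hμ hT a c
  have h2 := qt_iff hμ hT ha c
  omega

end Cols

-- Part 5b: the eta permutations
def etaBar (n : ℕ) (T : Tab) (a : ℕ) (η : Equiv.Perm ℕ) : ℕ → ℕ := fun c =>
  if qaT n T a ≤ c ∧ c < qaT n T a + taT n T a then qaT n T a + η (c - qaT n T a) else c

section Eta
variable {n : ℕ} {μ : YoungDiagram} {T : Tab} {a : ℕ} {η : Equiv.Perm ℕ}

lemma eta_lt (hηfix : ∀ i, taT n T a ≤ i → η i = i) {i : ℕ} (hi : i < taT n T a) :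
    η i < taT n T a := by
  by_contra hc
  push_neg at hc
  have := hηfix (η i) hc
  have := η.injective this
  omega

lemma etaBar_mem (hηfix : ∀ i, taT n T a ≤ i → η i = i) {c : ℕ}
    (hc : qaT n T a ≤ c ∧ c < qaT n T a + taT n T a) :
    qaT n T a ≤ etaBar n T a η c ∧ etaBar n T a η c < qaT n T a + taT n T a := by
  rw [etaBar, if_pos hc]
  have := eta_lt hηfix (show c - qaT n T a < taT n T a by omega)
  omega

lemma etaBar_inj (hηfix : ∀ i, taT n T a ≤ i → η i = i) :
    Function.Injective (etaBar n T a η) := by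
  intro c₁ c₂ h
  by_cases h1 : qaT n T a ≤ c₁ ∧ c₁ < qaT n T a + taT n T a <;>
    by_cases h2 : qaT n T a ≤ c₂ ∧ c₂ < qaT n T a + taT n T a
  · rw [etaBar, if_pos h1] at h
    rw [etaBar, if_pos h2] at h
    have : η (c₁ - qaT n T a) = η (c₂ - qaT n T a) := by omega
    have := η.injective this
    omega
  · exfalso
    have hm := etaBar_mem hηfix h1
    rw [h, etaBar, if_neg h2] at hm
    exact h2 hm
  · exfalso
    have hm := etaBar_mem hηfix h2
    rw [← h, etaBar, if_neg h1] at hm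
    exact h1 hm
  · rw [etaBar, if_neg h1, etaBar, if_neg h2] at h
    exact h

lemma eta_main (hμ : μ.cells.card = n) (hT : IsFilling μ T) {w : Equiv.Perm ℕ}
    (ha : 1 ≤ a) (hηfix : ∀ i, taT n T a ≤ i → η i = i)
    (hfun : ⇑w = etaFun n T a η) :
    ∀ m ∈ Finset.Icc 1 n, w m ∈ Finset.Icc 1 n ∧ rowIdx T (w m) = rowIdx T m ∧
      colIdx T (w m) = etaBar n T a η (colIdx T m) := by
  intro m hm
  have hwm : w m = etaFun n T a η m := congrFun hfun m
  have hb := posOf_cell hμ hT hm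
  have hm' := Finset.mem_Icc.1 hm
  by_cases hblk : qaT n T a ≤ colIdx T m ∧ colIdx T m < qaT n T a + taT n T a
  · -- in the block of columns of length a
    have hcond : 1 ≤ m ∧ m ≤ n ∧ qaT n T a ≤ colIdx T m ∧
        colIdx T m < qaT n T a + taT n T a := ⟨hm'.1, hm'.2, hblk.1, hblk.2⟩
    have hwm' : w m = T (rowIdx T m, qaT n T a + η (colIdx T m - qaT n T a)) := by
      rw [hwm, etaFun, if_pos hcond]
    have hcollen : μ.colLen (colIdx T m) = a := (colLen_block hμ hT ha _).2 hblk
    set c' := qaT n T a + η (colIdx T m - qaT n T a) with hc'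
    have hc'blk : qaT n T a ≤ c' ∧ c' < qaT n T a + taT n T a := by
      have := eta_lt hηfix (show colIdx T m - qaT n T a < taT n T a by omega)
      omega
    have hc'len : μ.colLen c' = a := (colLen_block hμ hT ha _).2 hc'blk
    have hrowlt : rowIdx T m < a := by
      have : (rowIdx T m, colIdx T m) ∈ μ.cells := hb.1
      rw [YoungDiagram.mem_cells, YoungDiagram.mem_iff_lt_colLen] at this
      omega
    have hcell : (rowIdx T m, c') ∈ μ.cells := by
      rw [YoungDiagram.mem_cells, YoungDiagram.mem_iff_lt_colLen]
      omega
    have hpos := filling_pos hT hcell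
    refine ⟨by rw [hwm', ← hμ]; exact filling_val_mem hT hcell, ?_, ?_⟩
    · rw [hwm']; exact hpos.1
    · rw [hwm', hpos.2, etaBar, if_pos hblk]
  · -- outside the block: fixed
    have hcond : ¬ (1 ≤ m ∧ m ≤ n ∧ qaT n T a ≤ colIdx T m ∧
        colIdx T m < qaT n T a + taT n T a) := by
      intro hcon
      exact hblk ⟨hcon.2.2.1, hcon.2.2.2⟩
    have hwm' : w m = m := by rw [hwm, etaFun, if_neg hcond]
    rw [hwm', etaBar, if_neg hblk]
    exact ⟨hm, rfl, rfl⟩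

lemma eta_suppIn {w : Equiv.Perm ℕ} (hfun : ⇑w = etaFun n T a η) : SuppIn n w := by
  intro i hi
  have hwm : w i = etaFun n T a η i := congrFun hfun i
  rw [hwm, etaFun, if_neg (by omega)]

end Eta

-- Part 5c: action of the extended column group on the Young symmetrizer
section EtaEps
variable {n : ℕ} {μ : YoungDiagram} {T : Tab} {a : ℕ} {η : Equiv.Perm ℕ}

lemma sign_conj (A B : Equiv.Perm (Fin n)) :
    Equiv.Perm.sign (A * B * A⁻¹) = Equiv.Perm.sign B := by
  rw [map_mul, map_mul, map_inv]
  rw [mul_comm (Equiv.Perm.sign A) (Equiv.Perm.sign B), mul_assoc, mul_inv_cancel, mul_one]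

lemma eta_conj_col (hμ : μ.cells.card = n) (hT : IsFilling μ T) {w : Equiv.Perm ℕ}
    (ha : 1 ≤ a) (hηfix : ∀ i, taT n T a ≤ i → η i = i) (hfun : ⇑w = etaFun n T a η)
    {τw : Equiv.Perm (Fin n)} (hτw : embedPerm n τw = w)
    {σ : Equiv.Perm (Fin n)} (hσ : σ ∈ colFinset n T) :
    τw * σ * τw⁻¹ ∈ colFinset n T := by
  rw [mem_colFinset]
  intro i hi
  have happ : embedPerm n (τw * σ * τw⁻¹) i = w ((embedPerm n σ) (w⁻¹ i)) := by
    rw [embedPerm_mul, embedPerm_mul, embedPerm_inv, hτw]; rfl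
  rw [happ]
  have hj : w⁻¹ i ∈ Finset.Icc 1 n := suppIn_mem (suppIn_inv (eta_suppIn hfun)) hi
  have hsj : embedPerm n σ (w⁻¹ i) ∈ Finset.Icc 1 n := embedPerm_mem n σ hj
  have h1 := (eta_main hμ hT ha hηfix hfun _ hsj).2.2
  have h2 := (eta_main hμ hT ha hηfix hfun _ hj).2.2
  rw [h1, mem_colFinset.1 hσ _ hj, ← h2, show ∀ j, w (w⁻¹ j) = j from w.apply_symm_apply]

lemma eta_conj_col' (hμ : μ.cells.card = n) (hT : IsFilling μ T) {w : Equiv.Perm ℕ}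
    (ha : 1 ≤ a) (hηfix : ∀ i, taT n T a ≤ i → η i = i) (hfun : ⇑w = etaFun n T a η)
    {τw : Equiv.Perm (Fin n)} (hτw : embedPerm n τw = w)
    {σ : Equiv.Perm (Fin n)} (hσ : σ ∈ colFinset n T) :
    τw⁻¹ * σ * τw ∈ colFinset n T := by
  rw [mem_colFinset]
  intro i hi
  have happ : embedPerm n (τw⁻¹ * σ * τw) i = w⁻¹ ((embedPerm n σ) (w i)) := by
    rw [embedPerm_mul, embedPerm_mul, embedPerm_inv, hτw]; rfl
  rw [happ]
  have hwi : w i ∈ Finset.Icc 1 n := suppIn_mem (eta_suppIn hfun) hi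
  have hswi : embedPerm n σ (w i) ∈ Finset.Icc 1 n := embedPerm_mem n σ hwi
  have hy : w⁻¹ ((embedPerm n σ) (w i)) ∈ Finset.Icc 1 n :=
    suppIn_mem (suppIn_inv (eta_suppIn hfun)) hswi
  apply etaBar_inj hηfix
  have h1 := (eta_main hμ hT ha hηfix hfun _ hy).2.2
  have h2 := (eta_main hμ hT ha hηfix hfun _ hi).2.2
  rw [← h1, show ∀ j, w (w⁻¹ j) = j from w.apply_symm_apply, mem_colFinset.1 hσ _ hwi, h2]

lemma eta_eps (hμ : μ.cells.card = n) (hT : IsFilling μ T) {w : Equiv.Perm ℕ}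
    (hw : w ∈ etaSet n T) (p : MvPolynomial ℕ ℚ) :
    rename ⇑w (epsAct n T p) = epsAct n T p := by
  obtain ⟨a, ha, η, hηfix, hfun⟩ := hw
  obtain ⟨τw, hτw⟩ := suppIn_exists (eta_suppIn hfun)
  have hτwrow : τw ∈ rowFinset n T := mem_rowFinset.2 fun i hi => by
    rw [hτw]; exact (eta_main hμ hT ha hηfix hfun i hi).2.1
  calc rename ⇑w (epsAct n T p)
      = ∑ σ ∈ colFinset n T, ∑ τ ∈ rowFinset n T, (Equiv.Perm.sign σ : ℤ) •
          rename ⇑(embedPerm n ((τw * σ * τw⁻¹) * (τw * τ))) p := by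
        rw [epsAct, map_sum]
        refine Finset.sum_congr rfl fun σ _ => ?_
        rw [map_sum]
        refine Finset.sum_congr rfl fun τ _ => ?_
        rw [map_zsmul, rename_rename, ← Equiv.Perm.coe_mul]
        have hperm : w * (embedPerm n σ * embedPerm n τ)
            = embedPerm n ((τw * σ * τw⁻¹) * (τw * τ)) := by
          rw [embedPerm_mul, embedPerm_mul, embedPerm_mul, embedPerm_inv,
            embedPerm_mul, hτw]
          group
        rw [hperm]
    _ = ∑ σ ∈ colFinset n T, ∑ τ ∈ rowFinset n T, (Equiv.Perm.sign σ : ℤ) •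
          rename ⇑(embedPerm n (σ * (τw * τ))) p := by
        refine Finset.sum_nbij' (fun σ => τw * σ * τw⁻¹) (fun σ => τw⁻¹ * σ * τw)
          ?_ ?_ ?_ ?_ ?_
        · intro σ hσ; exact eta_conj_col hμ hT ha hηfix hfun hτw hσ
        · intro σ hσ; exact eta_conj_col' hμ hT ha hηfix hfun hτw hσ
        · intro σ _; group
        · intro σ _; group
        · intro σ _
          refine Finset.sum_congr rfl fun τ _ => ?_
          simp only [sign_conj]
    _ = ∑ σ ∈ colFinset n T, ∑ τ ∈ rowFinset n T, (Equiv.Perm.sign σ : ℤ) •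
          rename ⇑(embedPerm n σ * embedPerm n τ) p := by
        refine Finset.sum_congr rfl fun σ _ => ?_
        refine Finset.sum_nbij' (fun τ => τw * τ) (fun τ => τw⁻¹ * τ) ?_ ?_ ?_ ?_ ?_
        · intro τ hτ; exact mul_mem_rowFinset hτwrow hτ
        · intro τ hτ; exact mul_mem_rowFinset (inv_mem_rowFinset hτwrow) hτ
        · intro τ _; group
        · intro τ _; group
        · intro τ _
          simp only [embedPerm_mul, mul_assoc]
    _ = epsAct n T p := by rw [epsAct]

lemma eta_sub_eps (hμ : μ.cells.card = n) (hT : IsFilling μ T) {w : Equiv.Perm ℕ}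
    (hw : w ∈ etaSubgroup n T) (p : MvPolynomial ℕ ℚ) :
    SuppIn n w ∧ rename ⇑w (epsAct n T p) = epsAct n T p := by
  refine Subgroup.closure_induction ?_ ?_ ?_ ?_ hw
  · rintro x ⟨a, ha, η, hηfix, hfun⟩
    exact ⟨eta_suppIn hfun, eta_eps hμ hT ⟨a, ha, η, hηfix, hfun⟩ p⟩
  · refine ⟨suppIn_one n, ?_⟩
    have h1 : ⇑(1 : Equiv.Perm ℕ) = id := rfl
    rw [h1, rename_id, AlgHom.id_apply]
  · intro x y _ _ hx hy
    refine ⟨suppIn_mul hx.1 hy.1, ?_⟩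
    rw [Equiv.Perm.coe_mul, ← rename_rename, hy.2, hx.2]
  · intro x _ hx
    refine ⟨suppIn_inv hx.1, ?_⟩
    have h2 := congrArg (rename (⇑x⁻¹)) hx.2
    rw [rename_rename] at h2
    have hid : ⇑x⁻¹ ∘ ⇑x = id := funext fun i => x.symm_apply_apply i
    rw [hid, rename_id, AlgHom.id_apply] at h2
    exact h2.symm

def colGS (n : ℕ) (T : Tab) : Subgroup (Equiv.Perm ℕ) where
  carrier := colGroupSet n T
  one_mem' := ⟨suppIn_one n, fun i _ => rfl⟩
  mul_mem' := fun {x y} hx hy => ⟨suppIn_mul hx.1 hy.1, fun i hi => by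
    rw [Equiv.Perm.mul_apply, hx.2 _ (suppIn_mem hy.1 hi), hy.2 i hi]⟩
  inv_mem' := fun {x} hx => ⟨suppIn_inv hx.1, fun i hi => by
    have hj := suppIn_mem (suppIn_inv hx.1) hi
    have h2 := hx.2 _ hj
    rw [show ∀ j, x (x⁻¹ j) = j from x.apply_symm_apply] at h2
    exact h2.symm⟩

lemma mem_colGroupSet_of {σ : Equiv.Perm ℕ} (hσ : σ ∈ colSubgroup n T) :
    σ ∈ colGroupSet n T :=
  (Subgroup.closure_le (colGS n T)).2 (fun _ hx => hx) hσ

lemma col_eps {σc : Equiv.Perm ℕ} (hσc : σc ∈ colGroupSet n T) (p : MvPolynomial ℕ ℚ) :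
    rename ⇑σc (epsAct n T p) = (signOn n σc : ℤ) • epsAct n T p := by
  obtain ⟨τ₀, hτ₀⟩ := suppIn_exists hσc.1
  have hτ₀col : τ₀ ∈ colFinset n T := mem_colFinset.2 fun i hi => by
    rw [hτ₀]; exact hσc.2 i hi
  have hsign : signOn n σc = (Equiv.Perm.sign τ₀ : ℤ) := by rw [← hτ₀, signOn_embed]
  rw [hsign]
  calc rename ⇑σc (epsAct n T p)
      = ∑ σ ∈ colFinset n T, ∑ τ ∈ rowFinset n T, (Equiv.Perm.sign σ : ℤ) •
          rename ⇑(embedPerm n (τ₀ * σ * τ)) p := by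
        rw [epsAct, map_sum]
        refine Finset.sum_congr rfl fun σ _ => ?_
        rw [map_sum]
        refine Finset.sum_congr rfl fun τ _ => ?_
        rw [map_zsmul, rename_rename, ← Equiv.Perm.coe_mul]
        congr 2
        rw [embedPerm_mul, embedPerm_mul, hτ₀]
        group
    _ = ∑ σ ∈ colFinset n T, ∑ τ ∈ rowFinset n T, (Equiv.Perm.sign (τ₀⁻¹ * σ) : ℤ) •
          rename ⇑(embedPerm n (σ * τ)) p := by
        refine Finset.sum_nbij' (fun σ => τ₀ * σ) (fun σ => τ₀⁻¹ * σ) ?_ ?_ ?_ ?_ ?_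
        · intro σ hσ; exact mul_mem_colFinset hτ₀col hσ
        · intro σ hσ; exact mul_mem_colFinset (inv_mem_colFinset hτ₀col) hσ
        · intro σ _; group
        · intro σ _; group
        · intro σ _
          refine Finset.sum_congr rfl fun τ _ => ?_
          have h1 : τ₀⁻¹ * (τ₀ * σ) = σ := by group
          simp only [h1]
    _ = (Equiv.Perm.sign τ₀ : ℤ) • ∑ σ ∈ colFinset n T, ∑ τ ∈ rowFinset n T,
          (Equiv.Perm.sign σ : ℤ) • rename ⇑(embedPerm n σ * embedPerm n τ) p := by
        rw [Finset.smul_sum]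
        refine Finset.sum_congr rfl fun σ _ => ?_
        rw [Finset.smul_sum]
        refine Finset.sum_congr rfl fun τ _ => ?_
        have hsgn : ((Equiv.Perm.sign (τ₀⁻¹ * σ) : ℤˣ) : ℤ)
            = (Equiv.Perm.sign τ₀ : ℤ) * ((Equiv.Perm.sign σ : ℤˣ) : ℤ) := by
          rw [map_mul, Units.val_mul, Equiv.Perm.sign_inv]
        rw [hsgn, ← smul_smul, embedPerm_mul]
    _ = (Equiv.Perm.sign τ₀ : ℤ) • epsAct n T p := by rw [epsAct]

end EtaEps
/-- The higher Specht polynomial `F_T^S` has integer coefficients, is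
homogeneous of degree `cc(S)`, contains the monomial `p_T^S` with coefficient exactly `1`,
and the extended column group `C̃(T)` acts on it through the character `sgn~`. -/
theorem statement_9 (n : ℕ) (μ : YoungDiagram) (hμ : μ.cells.card = n) (S T : Tab)
    (hS : IsStandard μ S) (hT : IsFilling μ T) :
    (∀ m : ℕ →₀ ℕ, ∃ z : ℤ, (FTS n T S).coeff m = (z : ℚ)) ∧
    (FTS n T S).IsHomogeneous (ccStat n S) ∧
    (∀ m : ℕ →₀ ℕ, (monomial m (1 : ℚ)) = pTS n T S → (FTS n T S).coeff m = 1) ∧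
    (∀ g w σ : Equiv.Perm ℕ, g ∈ extColSubgroup n T → w ∈ etaSubgroup n T →
      σ ∈ colSubgroup n T → g = w * σ →
      rename (⇑g) (FTS n T S) = ((signOn n σ : ℚ)) • FTS n T S) := by
  refine ⟨fun m => coeff_FTS_int m, FTS_homog hμ hS hT, ?_, ?_⟩
  · intro m hm
    have hmeq : m = expM n S T := by
      have h2 : (monomial m (1 : ℚ)) = monomial (expM n S T) (1 : ℚ) := by
        rw [hm, pTS_eq_monomial]
      exact monomial_left_injective one_ne_zero h2
    rw [hmeq]
    exact coeff_FTS_self hμ hS hT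
  · intro g w σ _ hw hσ hgw
    have hσc := mem_colGroupSet_of hσ
    have hrw : rename ⇑σ (FTS n T S) = (signOn n σ : ℚ) • FTS n T S := by
      calc rename ⇑σ (FTS n T S)
          = ((sTS n T S : ℚ))⁻¹ • rename ⇑σ (epsAct n T (pTS n T S)) := by
            rw [FTS, map_smul]
        _ = ((sTS n T S : ℚ))⁻¹ • ((signOn n σ : ℤ) • epsAct n T (pTS n T S)) := by
            rw [col_eps hσc]
        _ = (signOn n σ : ℚ) • FTS n T S := by
            rw [FTS, ← Int.cast_smul_eq_zsmul ℚ (signOn n σ), smul_comm]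
    have hwF : rename ⇑w (FTS n T S) = FTS n T S := by
      rw [FTS, map_smul, (eta_sub_eps hμ hT hw (pTS n T S)).2]
    rw [hgw, Equiv.Perm.coe_mul, ← rename_rename, hrw, map_smul, hwF]

end HigherSpecht
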